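/- arXiv:1811.03185 — 3 statements merged into one kernel-verified Lean document; each statement's English description precedes it below -/
import Mathlib

section
/- Let A be a finite alphabet and let F ⊆ A* be a recurrent set. If X is a rational bifix code contained in F, then X is F-thin, i.e., some word of F is not a factor of any element of X. -/
/-! Common definitions: words over a finite alphabet `A` are terms of `List A`,
concatenation being the monoid operation of the free monoid `A*`. -/

namespace PaperDefs

variable {A : Type*}

/-- `w` belongs to the Kleene star `X*` of `X`: it is a (possibly empty)
concatenation of elements of `X`. -/
def InStar (X : Set (List A)) (w : List A) : Prop :=
  ∃ l : List (List A), (∀ u ∈ l, u ∈ X) ∧ l.flatten = w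

/-- The language `X*`. -/
def star (X : Set (List A)) : Set (List A) := {w | InStar X w}

/-- A prefix code: a nonempty set of nonempty words, none of which is a proper
prefix of another. -/
def IsPrefixCode (X : Set (List A)) : Prop :=
  X.Nonempty ∧ (∀ w ∈ X, w ≠ []) ∧ ∀ u ∈ X, ∀ v ∈ X, u <+: v → u = v

/-- A suffix code. -/
def IsSuffixCode (X : Set (List A)) : Prop :=
  X.Nonempty ∧ (∀ w ∈ X, w ≠ []) ∧ ∀ u ∈ X, ∀ v ∈ X, u <:+ v → u = v

/-- A bifix code. -/
def IsBifixCode (X : Set (List A)) : Prop := IsPrefixCode X ∧ IsSuffixCode X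

/-- A factorial set contains all factors of its elements. -/
def Factorial (F : Set (List A)) : Prop := ∀ w ∈ F, ∀ u, u <:+: w → u ∈ F

/-- A recurrent set. -/
def Recurrent (F : Set (List A)) : Prop :=
  Factorial F ∧ F.Nonempty ∧ F ≠ {[]} ∧ ∀ u ∈ F, ∀ v ∈ F, ∃ w, u ++ w ++ v ∈ F

/-- A uniformly recurrent set. -/
def UniformlyRecurrent (F : Set (List A)) : Prop :=
  Recurrent F ∧ ∀ u ∈ F, ∃ n : ℕ, ∀ w ∈ F, n ≤ w.length → u <:+: w

/-- A parse of `w` with respect to `X` : a triple `(v, x, u)` with `w = v x u`,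
`v` has no suffix in `X`, `x ∈ X*`, and `u` has no prefix in `X`. -/
def IsParse (X : Set (List A)) (w : List A) (p : List A × List A × List A) : Prop :=
  p.1 ++ p.2.1 ++ p.2.2 = w ∧ (¬ ∃ s ∈ X, s <:+ p.1) ∧ InStar X p.2.1 ∧
    ¬ ∃ s ∈ X, s <+: p.2.2

/-- `δ_X(w)`, the number of parses of `w` with respect to `X`. -/
noncomputable def delta (X : Set (List A)) (w : List A) : ℕ :=
  {p | IsParse X w p}.ncard

/-- The `F`-degree `d_F(X)` of `X`, as an extended natural number. -/
noncomputable def Fdeg (X F : Set (List A)) : ℕ∞ :=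
  ⨆ w ∈ F, (delta X w : ℕ∞)

/-- The degree `d(X)` of `X`. -/
noncomputable def deg (X : Set (List A)) : ℕ∞ := Fdeg X Set.univ

/-- An `F`-maximal bifix code. -/
def IsFMaximalBifixCode (F X : Set (List A)) : Prop :=
  IsBifixCode X ∧ X ⊆ F ∧ ∀ Y : Set (List A), IsBifixCode Y → Y ⊆ F → X ⊆ Y → Y = X

/-- An `F`-maximal prefix code. -/
def IsFMaximalPrefixCode (F X : Set (List A)) : Prop :=
  IsPrefixCode X ∧ X ⊆ F ∧ ∀ Y : Set (List A), IsPrefixCode Y → Y ⊆ F → X ⊆ Y → Y = X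

/-- `X` is `F`-thin: some word of `F` is not a factor of any element of `X`. -/
def FThin (F X : Set (List A)) : Prop := ∃ w ∈ F, ∀ x ∈ X, ¬ w <:+: x

/-- A rational (regular) language. -/
def IsRational (L : Set (List A)) : Prop :=
  ∃ (σ : Type) (_ : Fintype σ) (M : DFA A σ), ∀ w : List A, w ∈ M.accepts ↔ w ∈ L

/-- The syntactic congruence of the language `L`. -/
def SynEquiv (L : Set (List A)) (u v : List A) : Prop :=
  ∀ x y : List A, x ++ u ++ y ∈ L ↔ x ++ v ++ y ∈ L

/-- `η : A* → M` is (a realization of) the syntactic homomorphism onto the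
syntactic monoid of `L`. -/
structure IsSyntacticHom (L : Set (List A)) {M : Type*} [Monoid M] (η : List A → M) : Prop where
  map_nil : η [] = 1
  map_append : ∀ u v : List A, η (u ++ v) = η u * η v
  surj : Function.Surjective η
  syn : ∀ u v : List A, η u = η v ↔ SynEquiv L u v

section Green

variable {M : Type*} [Monoid M]

/-- The `J`-order: `MuM ⊆ MvM`. -/
def JLe (u v : M) : Prop := ∃ x y, u = x * v * y

/-- Green's relation `J`. -/
def JEquiv (u v : M) : Prop := JLe u v ∧ JLe v u

/-- Green's relation `R`. -/
def REquiv (u v : M) : Prop := (∃ x, v = u * x) ∧ (∃ x, u = v * x)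

/-- Green's relation `L`. -/
def LEquiv (u v : M) : Prop := (∃ x, v = x * u) ∧ (∃ x, u = x * v)

/-- Green's relation `H`. -/
def HEquiv (u v : M) : Prop := REquiv u v ∧ LEquiv u v

/-- Green's relation `D`. -/
def DEquiv (u v : M) : Prop := ∃ s, REquiv u s ∧ LEquiv s v

/-- The `H`-class of an element. -/
def HClass (e : M) : Set M := {m | HEquiv m e}

/-- Membership in the minimum ideal (minimum `J`-class) of `M`. -/
def InMinIdeal (m : M) : Prop := ∀ n : M, JLe m n

/-- `S` is a subgroup of the monoid `M`: a subsemigroup which is a group. -/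
def IsSubgroupIn (S : Set M) : Prop :=
  S.Nonempty ∧ (∀ x ∈ S, ∀ y ∈ S, x * y ∈ S) ∧
    ∃ e ∈ S, (∀ x ∈ S, e * x = x ∧ x * e = x) ∧ ∀ x ∈ S, ∃ y ∈ S, x * y = e ∧ y * x = e

/-- The subsets `S ⊆ M` and `T ⊆ N` (each closed under multiplication, e.g.
maximal subgroups) are isomorphic as groups: there is a multiplicative
bijection from `S` onto `T`. -/
def GroupIsoOn {N : Type*} [Monoid N] (S : Set M) (T : Set N) : Prop :=
  ∃ φ : M → N, Set.BijOn φ S T ∧ ∀ x ∈ S, ∀ y ∈ S, φ (x * y) = φ x * φ y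

end Green

/-- `m` belongs to `J_F(X)`, the minimum `J`-class of the syntactic monoid of
`X*` meeting the image of `F` under the syntactic homomorphism `η`. -/
def InFMinJ {M : Type*} [Monoid M] (η : List A → M) (F : Set (List A)) (m : M) : Prop :=
  (∃ w ∈ F, JEquiv m (η w)) ∧ ∀ w ∈ F, JLe m (η w)

/-- A group code: a prefix code `Z` defined by a transitive permutation
representation of `A*` on a finite set, `Z*` being the stabilizer of a point. -/
def IsGroupCode (Z : Set (List A)) : Prop :=
  IsPrefixCode Z ∧
  ∃ (Q : Type) (_ : Fintype Q) (q₀ : Q) (α : List A → Equiv.Perm Q),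
    α [] = 1 ∧ (∀ u v : List A, α (u ++ v) = α u * α v) ∧
    (∀ q q' : Q, ∃ w : List A, α w q = q') ∧
    (∀ w : List A, InStar Z w ↔ α w q₀ = q₀) ∧
    Z = {w : List A | α w q₀ = q₀ ∧ w ≠ [] ∧
          ¬ ∃ u v : List A, u ≠ [] ∧ v ≠ [] ∧ α u q₀ = q₀ ∧ α v q₀ = q₀ ∧ w = u ++ v}

/-- Vertices of the extension graph of `w` in `F`: the disjoint union of
`L(w)` and `R(w)`. -/
def ExtVertex (F : Set (List A)) (w : List A) : Sum A A → Prop :=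
  fun x => Sum.elim (fun a => a :: w ∈ F) (fun b => w ++ [b] ∈ F) x

/-- The edge relation of the extension graph of `w` in `F`. -/
def ExtRel (F : Set (List A)) (w : List A) : Sum A A → Sum A A → Prop :=
  fun x y =>
    match x, y with
    | Sum.inl a, Sum.inr b => a :: (w ++ [b]) ∈ F
    | _, _ => False

/-- The extension graph `G(w)` of `w` in `F`. -/
def extGraph (F : Set (List A)) (w : List A) :
    SimpleGraph {x : Sum A A // ExtVertex F w x} :=
  SimpleGraph.fromRel fun x y => ExtRel F w x.1 y.1

/-- `F` is connected: every extension graph of a word of `F` is connected. -/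
def ConnectedSet (F : Set (List A)) : Prop :=
  ∀ w ∈ F, (extGraph F w).Connected

/-- `F` is a tree set: every extension graph of a word of `F` is a tree. -/
def TreeSet (F : Set (List A)) : Prop :=
  ∀ w ∈ F, (extGraph F w).IsTree

/-- The alphabet of `F` is the whole of `A`. -/
def AlphabetIs (F : Set (List A)) : Prop := ∀ a : A, [a] ∈ F

/-- The left quotient `u⁻¹L`, i.e. the state reached from the initial state of
the minimal automaton of `L` by reading `u`. -/
def leftQuot (L : Set (List A)) (u : List A) : Set (List A) := {w | u ++ w ∈ L}

/-- The set of states of the minimal automaton of `L`: the nonempty left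
quotients of `L`. -/
def MinStates (L : Set (List A)) : Set (Set (List A)) :=
  {q | q.Nonempty ∧ ∃ u : List A, q = leftQuot L u}

/-- The (partial) transition of the minimal automaton: `q · v`; it is defined
when the resulting set is nonempty. -/
def stepW (q : Set (List A)) (v : List A) : Set (List A) := {w | v ++ w ∈ q}

/-- The rank of the word `v` in the minimal automaton of `L`: the number of
distinct states `q · v` with `q` a state such that `q · v` is defined. -/
noncomputable def wordRank (L : Set (List A)) (v : List A) : ℕ :=
  ((fun q => stepW q v) '' {q ∈ MinStates L | (stepW q v).Nonempty}).ncard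

/-- The set of first return words of `F` to `u`. -/
def ReturnWords (F : Set (List A)) (u : List A) : Set (List A) :=
  {v | v ≠ [] ∧ u ++ v ∈ F ∧ u <:+ u ++ v ∧
    ¬ ∃ x y : List A, x ≠ [] ∧ y ≠ [] ∧ u ++ v = x ++ u ++ y}

/-- A code: every word has at most one factorization into elements of `X`. -/
def IsCode (X : Set (List A)) : Prop :=
  ∀ l m : List (List A), (∀ u ∈ l, u ∈ X) → (∀ u ∈ m, u ∈ X) →
    l.flatten = m.flatten → l = m

/-- The set `I = Q_X · K` of images of states of the minimal automaton of `L`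
under (partial) transitions by words whose syntactic image lies in `K`. -/
def ImageSet (L : Set (List A)) {M : Type*} [Monoid M] (η : List A → M) (K : Set M) :
    Set (Set (List A)) :=
  {p | ∃ q ∈ MinStates L, ∃ v : List A, η v ∈ K ∧ (stepW q v).Nonempty ∧ p = stepW q v}

/-- A witness for "a finite monoid `M` together with a monoid homomorphism
`A* → M`". -/
structure FiniteMonoidHomWitness (A : Type*) where
  M : Type
  [fin : Fintype M]
  [mon : Monoid M]
  φ : List A → M
  map_nil : φ [] = 1
  map_append : ∀ u v : List A, φ (u ++ v) = φ u * φ v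

end PaperDefs
namespace Stmt2Aux
open PaperDefs

/-! ### Monoid lemmas -/

section MonoidLemmas

variable {M : Type*} [Monoid M]

theorem jle_refl (a : M) : JLe a a := ⟨1, 1, by simp⟩

theorem jle_trans {a b c : M} (h1 : JLe a b) (h2 : JLe b c) : JLe a c := by
  obtain ⟨x, y, rfl⟩ := h1
  obtain ⟨x', y', rfl⟩ := h2
  exact ⟨x * x', y' * y, by simp [mul_assoc]⟩

theorem exists_jmin [Finite M] {S : Set M} (hS : S.Nonempty) :
    ∃ m ∈ S, ∀ n ∈ S, JLe n m → JLe m n := by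
  obtain ⟨m, hm, hmin⟩ :=
    Set.exists_min_image S (fun m => {n : M | JLe n m}.ncard) (Set.toFinite S) hS
  refine ⟨m, hm, fun n hn hnm => ?_⟩
  have hsub : {k : M | JLe k n} ⊆ {k : M | JLe k m} := fun k hk => jle_trans hk hnm
  have heq : {k : M | JLe k n} = {k : M | JLe k m} :=
    Set.eq_of_subset_of_ncard_le hsub (hmin n hn) (Set.toFinite _)
  have hmem : m ∈ {k : M | JLe k n} := by rw [heq]; exact jle_refl m
  exact hmem

theorem exists_idem_pow [Finite M] (a : M) : ∃ n, 1 ≤ n ∧ a ^ n * a ^ n = a ^ n := by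
  obtain ⟨i, j, hne, hij⟩ := Finite.exists_ne_map_eq_of_infinite (fun n : ℕ => a ^ n)
  wlog hlt : i < j generalizing i j
  · exact this j i hne.symm hij.symm (by omega)

  set p := j - i with hp
  have hp1 : 1 ≤ p := by omega
  have hij' : a ^ i = a ^ (i + p) := by rw [show i + p = j by omega]; exact hij
  have key : ∀ k, a ^ (i + k) = a ^ (i + p + k) := by
    intro k
    rw [pow_add, hij', ← pow_add]
  have key2 : ∀ t k, a ^ (i + k) = a ^ (i + k + t * p) := by
    intro t
    induction t with
    | zero => simp
    | succ t ih =>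
      intro k
      rw [ih k, show i + k + (t + 1) * p = i + p + (k + t * p) by ring, ← key (k + t * p),
        show i + (k + t * p) = i + k + t * p by ring]
  have hNi : i < p * (i + 1) := by
    calc i < i + 1 := Nat.lt_succ_self i
    _ ≤ p * (i + 1) := Nat.le_mul_of_pos_left _ (by omega)
  refine ⟨p * (i + 1), by omega, ?_⟩
  rw [← pow_add]
  have h1 : p * (i + 1) + p * (i + 1) = i + (p * (i + 1) - i) + (i + 1) * p := by
    have := hNi.le; rw [Nat.mul_comm (i+1) p]; omega
  have h2 : p * (i + 1) = i + (p * (i + 1) - i) := by omega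
  rw [h1, ← key2 (i + 1) (p * (i + 1) - i), ← h2]

theorem pow_eq_of_mul_eq [Finite M] {a b e : M} (hab : a * b = e) (hae : a * e = a) :
    ∃ n, 1 ≤ n ∧ a ^ n = e := by
  have habk : ∀ n, a ^ (n + 1) * b ^ (n + 1) = e := by
    intro n
    induction n with
    | zero => simpa using hab
    | succ n ih =>
      have h : a ^ (n + 2) * b ^ (n + 2) = a * (a ^ (n + 1) * b ^ (n + 1)) * b := by
        rw [pow_succ' a (n + 1), pow_succ b (n + 1)]
        simp [mul_assoc]
      rw [h, ih, hae, hab]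
  have haek : ∀ n, a ^ (n + 1) * e = a ^ (n + 1) := by
    intro n
    induction n with
    | zero => simpa using hae
    | succ n _ => rw [pow_succ, mul_assoc, hae]
  obtain ⟨k, hk1, hkid⟩ := exists_idem_pow a
  obtain ⟨k', rfl⟩ : ∃ k', k = k' + 1 := ⟨k - 1, by omega⟩
  have hfin : e = a ^ (k' + 1) := by
    calc e = a ^ (k' + 1) * b ^ (k' + 1) := (habk k').symm
    _ = a ^ (k' + 1) * a ^ (k' + 1) * b ^ (k' + 1) := by rw [hkid]
    _ = a ^ (k' + 1) * e := by rw [mul_assoc, habk]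
    _ = a ^ (k' + 1) := haek k'
  exact ⟨k' + 1, by omega, hfin.symm⟩

theorem idem_pow {e : M} (he : e * e = e) : ∀ j, e ^ (j + 1) = e := by
  intro j
  induction j with
  | zero => simp
  | succ j ih => rw [pow_succ, ih, he]

theorem pow_mul_idem {c e : M} (hce : c * e = c) : ∀ j, c ^ (j + 1) * e = c ^ (j + 1) := by
  intro j
  induction j with
  | zero => simpa using hce
  | succ j _ => rw [pow_succ, mul_assoc, hce]

theorem pow_eq_idem_of_sandwich [Finite M] {e q x y : M} (he : e * e = e)
    (hxy : e = x * (e * q * e) * y) : ∃ l, 1 ≤ l ∧ (e * q * e) ^ l = e := by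
  set n := e * q * e with hn
  have hen : e * n = n := by rw [hn, ← mul_assoc, ← mul_assoc, he]
  have hne : n * e = n := by rw [hn, mul_assoc (e * q) e e, he]
  set x₁ := e * x * e with hx1
  set y₁ := e * y * e with hy1
  have hsand : x₁ * n * y₁ = e := by
    have h1 : x₁ * n = e * (x * n) := by rw [hx1, mul_assoc, hen, mul_assoc]
    have h2 : n * y₁ = (n * y) * e := by
      rw [hy1, ← mul_assoc, ← mul_assoc, hne]
    calc x₁ * n * y₁ = x₁ * (n * y₁) := by rw [mul_assoc]
    _ = x₁ * ((n * y) * e) := by rw [h2]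
    _ = (x₁ * n) * y * e := by simp [mul_assoc]
    _ = (e * (x * n)) * y * e := by rw [h1]
    _ = e * (x * n * y) * e := by simp [mul_assoc]
    _ = e * (x * (e * q * e) * y) * e := by rw [hn]
    _ = e * e * e := by rw [← hxy]
    _ = e := by rw [he, he]
  have hx₁e : x₁ * e = x₁ := by rw [hx1, mul_assoc, he]
  have hane : (x₁ * n) * e = x₁ * n := by rw [mul_assoc, hne]
  obtain ⟨k, hk1, hk⟩ := pow_eq_of_mul_eq hsand hane
  obtain ⟨k', rfl⟩ : ∃ k', k = k' + 1 := ⟨k - 1, by omega⟩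
  set c := (x₁ * n) ^ k' * x₁ with hc
  have hcn : c * n = e := by
    rw [hc, mul_assoc, ← pow_succ]
    exact hk
  have hce : c * e = c := by rw [hc, mul_assoc, hx₁e]
  obtain ⟨m, hm1, hmc⟩ := pow_eq_of_mul_eq hcn hce
  obtain ⟨m', rfl⟩ : ∃ m', m = m' + 1 := ⟨m - 1, by omega⟩
  have hn' : n = c ^ m' * e := by
    calc n = e * n := hen.symm
    _ = c ^ (m' + 1) * n := by rw [hmc]
    _ = c ^ m' * (c * n) := by rw [pow_succ, mul_assoc]
    _ = c ^ m' * e := by rw [hcn]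
  rcases Nat.eq_zero_or_pos m' with h0 | hpos
  · subst h0
    refine ⟨1, le_refl 1, ?_⟩
    rw [pow_one, hn']
    simp
  · obtain ⟨m'', rfl⟩ : ∃ m'', m' = m'' + 1 := ⟨m' - 1, by omega⟩
    have hnc : n = c ^ (m'' + 1) := by rw [hn', pow_mul_idem hce]
    refine ⟨m'' + 2, by omega, ?_⟩
    rw [hnc, ← pow_mul, show (m'' + 1) * (m'' + 2) = (m'' + 2) * (m'' + 1) by ring, pow_mul,
      hmc]
    exact idem_pow he m''

end MonoidLemmas
end Stmt2Aux

namespace Stmt2Aux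

/-! ### Ramsey-type lemma -/

section Ramsey

variable {C : Type*} [Finite C]

theorem pigC (c : ℕ → ℕ → C) (S : Set ℕ) (hS : S.Infinite) (a : ℕ) :
    ∃ γ : C, {s | s ∈ S ∧ a < s ∧ c a s = γ}.Infinite := by
  by_contra hcon
  push_neg at hcon
  have hfin : ∀ γ : C, {s | s ∈ S ∧ a < s ∧ c a s = γ}.Finite := fun γ =>
    hcon γ
  have hsub : {s | s ∈ S ∧ a < s} ⊆ ⋃ γ : C, {s | s ∈ S ∧ a < s ∧ c a s = γ} :=
    fun s hs => Set.mem_iUnion.2 ⟨c a s, hs.1, hs.2, rfl⟩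
  have hfin2 : {s | s ∈ S ∧ a < s}.Finite := (Set.finite_iUnion hfin).subset hsub
  have hinf : {s | s ∈ S ∧ a < s}.Infinite := by
    have heq : {s | s ∈ S ∧ a < s} = S \ {s | s ≤ a} := by
      ext s; simp [Set.mem_diff, not_le]
    rw [heq]
    exact hS.diff (Set.finite_le_nat a)
  exact hinf hfin2

noncomputable def rchain (c : ℕ → ℕ → C) : ℕ → {S : Set ℕ // S.Infinite} := fun t =>
  Nat.rec ⟨Set.univ, Set.infinite_univ⟩
    (fun _ p =>
      ⟨{s | s ∈ p.1 ∧ p.2.nonempty.choose < s ∧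
          c p.2.nonempty.choose s = (pigC c p.1 p.2 p.2.nonempty.choose).choose},
        (pigC c p.1 p.2 p.2.nonempty.choose).choose_spec⟩) t

theorem ramsey_triangle (c : ℕ → ℕ → C) :
    ∃ i j k, i < j ∧ j < k ∧ c i j = c j k ∧ c i j = c i k := by
  set ch := rchain c with hch
  set a : ℕ → ℕ := fun t => (ch t).2.nonempty.choose with ha
  set γ : ℕ → C := fun t => (pigC c (ch t).1 (ch t).2 (a t)).choose with hγ
  have hS : ∀ t, (ch (t + 1)).1 = {s | s ∈ (ch t).1 ∧ a t < s ∧ c (a t) s = γ t} := fun t => rfl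
  have haS : ∀ t, a t ∈ (ch t).1 := fun t => (ch t).2.nonempty.choose_spec
  have hmono : ∀ t, (ch (t + 1)).1 ⊆ (ch t).1 := by
    intro t s hs
    rw [hS] at hs
    exact hs.1
  have hmono' : ∀ t t', t ≤ t' → (ch t').1 ⊆ (ch t).1 := by
    intro t t' h
    induction h with
    | refl => exact subset_rfl
    | step h ih => exact ih.trans' (hmono _)
  have key : ∀ t t', t < t' → a t < a t' ∧ c (a t) (a t') = γ t := by
    intro t t' h
    have h2 : a t' ∈ (ch (t + 1)).1 := hmono' (t + 1) t' h (haS t')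
    rw [hS] at h2
    exact ⟨h2.2.1, h2.2.2⟩
  have main : ∀ t t', t < t' → γ t = γ t' →
      ∃ i j k, i < j ∧ j < k ∧ c i j = c j k ∧ c i j = c i k := by
    intro t t' ht heq
    obtain ⟨h1, h2⟩ := key t t' ht
    obtain ⟨h3, h4⟩ := key t' (t' + 1) (Nat.lt_succ_self t')
    obtain ⟨h5, h6⟩ := key t (t' + 1) (by omega)
    exact ⟨a t, a t', a (t' + 1), h1, h3, by rw [h2, h4, heq], by rw [h2, h6]⟩
  obtain ⟨t, t', hne, heq⟩ := Finite.exists_ne_map_eq_of_infinite γ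
  rcases lt_or_gt_of_ne hne with h | h
  · exact main t t' h heq
  · exact main t' t h heq.symm

end Ramsey

/-! ### word chain -/

noncomputable def fchain {A : Type} (F : Set (List A))
    (R : (u : List A) → u ∈ F → (v : List A) → v ∈ F → List A)
    (hR : ∀ (u) (hu : u ∈ F) (v) (hv : v ∈ F), u ++ R u hu v hv ++ v ∈ F)
    (d : List A) (hd : d ∈ F) : ℕ → {W : List A // W ∈ F} := fun t =>
  Nat.rec ⟨d, hd⟩ (fun _ p => ⟨p.1 ++ R p.1 p.2 d hd ++ d, hR p.1 p.2 d hd⟩) t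

theorem flatten_replicate_rot {A : Type} (p q : List A) :
    ∀ t, p ++ (List.replicate t (q ++ p)).flatten = (List.replicate t (p ++ q)).flatten ++ p := by
  intro t
  induction t with
  | zero => simp
  | succ t ih =>
    simp only [List.replicate_succ, List.flatten_cons, List.append_assoc, ih]

end Stmt2Aux

namespace Stmt2Aux
open PaperDefs

theorem core {A : Type} {M : Type*} [Monoid M] [Finite M]
    (F X : Set (List A)) (hF : Recurrent F) (hpc : IsPrefixCode X) (hXF : X ⊆ F)
    (h : List A → M) (h1 : h [] = 1) (hm : ∀ u v, h (u ++ v) = h u * h v)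
    (P : Set M) (hrecog : ∀ w, w ∈ X ↔ h w ∈ P) : FThin F X := by
  by_contra hthin
  rw [FThin] at hthin
  push_neg at hthin
  obtain ⟨hFac, hFne, hFone, hRec⟩ := hF
  -- a nonempty word of F
  have hzex : ∃ z ∈ F, z ≠ ([] : List A) := by
    by_contra hz
    push_neg at hz
    apply hFone
    apply Set.eq_singleton_iff_unique_mem.2
    obtain ⟨w, hw⟩ := hFne
    exact ⟨(hz w hw) ▸ hw, fun v hv => hz v hv⟩
  obtain ⟨z, hzF, hz0⟩ := hzex
  -- J-minimal image
  obtain ⟨m, hmS, hmin⟩ := exists_jmin (M := M) (S := h '' F) (hFne.image h)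
  obtain ⟨w₀, hw₀F, rfl⟩ := hmS
  have hminAll : ∀ v ∈ F, JLe (h w₀) (h v) := by
    intro v hv
    obtain ⟨s, hs⟩ := hRec w₀ hw₀F v hv
    have h1' : JLe (h (w₀ ++ s ++ v)) (h w₀) :=
      ⟨1, h s * h v, by rw [hm, hm]; simp [mul_assoc]⟩
    have h2' := hmin _ ⟨_, hs, rfl⟩ h1'
    refine jle_trans h2' ⟨h w₀ * h s, 1, ?_⟩
    rw [hm, hm]
    simp [mul_assoc]
  -- the word d
  obtain ⟨s₀, hdF⟩ := hRec w₀ hw₀F z hzF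
  set d := w₀ ++ s₀ ++ z with hdd
  have hd0 : d ≠ [] := by
    intro hnil
    exact hz0 (List.append_eq_nil_iff.mp hnil).2
  have hjd : JLe (h d) (h w₀) := ⟨1, h s₀ * h z, by rw [hdd, hm, hm]; simp [mul_assoc]⟩
  -- the chain
  choose R hR using hRec
  set u : ℕ → List A := fun t => (fchain F R hR d hdF t).1 with hu_def
  have huF : ∀ t, u t ∈ F := fun t => (fchain F R hR d hdF t).2
  have hstep : ∀ t, ∃ Et, u (t + 1) = u t ++ Et ++ d := fun t => ⟨_, rfl⟩
  set gap : ℕ → ℕ → List A := fun i j => (u j).drop (u i).length with hgap_def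
  have hpre : ∀ i j, i ≤ j → u i <+: u j := by
    intro i j hij
    induction hij with
    | refl => exact List.prefix_refl _
    | @step j' hle ih =>
      obtain ⟨Et, hEt⟩ := hstep j'
      refine ih.trans ⟨Et ++ d, ?_⟩
      rw [hEt, List.append_assoc]
  have hgap : ∀ i j, i ≤ j → u i ++ gap i j = u j := by
    intro i j hij
    obtain ⟨t, ht⟩ := hpre i j hij
    have hgt : gap i j = t := by
      simp only [hgap_def, ← ht, List.drop_left]
    rw [hgt, ht]
  have hgapF : ∀ i j, i ≤ j → gap i j ∈ F := by
    intro i j hij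
    refine hFac (u j) (huF j) _ ⟨u i, [], ?_⟩
    rw [List.append_nil]
    exact hgap i j hij
  have hgapcomp : ∀ i j k, i ≤ j → j ≤ k → gap i j ++ gap j k = gap i k := by
    intro i j k hij hjk
    apply List.append_cancel_left (as := u i)
    rw [← List.append_assoc, hgap i j hij, hgap j k hjk, hgap i k (hij.trans hjk)]
  have hgapsplit : ∀ i j, i < j → ∃ E ρ, gap i j = E ++ d ++ ρ := by
    intro i j hij
    obtain ⟨Et, hEt⟩ := hstep i
    have h1' : gap i (i + 1) = Et ++ d := by
      apply List.append_cancel_left (as := u i)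
      rw [hgap i (i + 1) (Nat.le_succ i), hEt, List.append_assoc]
    refine ⟨Et, gap (i + 1) j, ?_⟩
    rw [← hgapcomp i (i + 1) j (Nat.le_succ i) hij, h1']
  have hgapne : ∀ i j, i < j → gap i j ≠ [] := by
    intro i j hij hnil
    obtain ⟨E, ρ, hsplit⟩ := hgapsplit i j hij
    rw [hsplit] at hnil
    exact hd0 (List.append_eq_nil_iff.mp (List.append_eq_nil_iff.mp hnil).1).2
  -- Ramsey
  obtain ⟨i, j, k, hij, hjk, hc1, hc2⟩ := ramsey_triangle (fun i j => h (gap i j))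
  set w := gap i j with hw_def
  set e := h w with he_def
  have he : e * e = e := by
    calc e * e = h (gap i j) * h (gap j k) := by rw [← hc1]
    _ = h (gap i j ++ gap j k) := (hm _ _).symm
    _ = h (gap i k) := by rw [hgapcomp i j k hij.le hjk.le]
    _ = e := hc2.symm
  have hwF : w ∈ F := hgapF i j hij.le
  have hw0 : w ≠ [] := hgapne i j hij
  have hje : JLe e (h d) := by
    obtain ⟨E, ρ, hsplit⟩ := hgapsplit i j hij
    exact ⟨h E, h ρ, by rw [he_def, hw_def, hsplit, hm, hm]⟩
  have hjev : ∀ v ∈ F, JLe e (h v) := fun v hv =>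
    jle_trans hje (jle_trans hjd (hminAll v hv))
  -- apply non-thinness
  obtain ⟨x, hxX, hinf⟩ := hthin w hwF
  obtain ⟨u', v', huv⟩ := hinf
  have hxF : x ∈ F := hXF hxX
  obtain ⟨b, hbF⟩ : ∃ b, x ++ b ++ w ∈ F := ⟨R x hxF w hwF, hR x hxF w hwF⟩
  set W₂ := w ++ ((v' ++ b) ++ w) with hW₂_def
  have hW₂F : W₂ ∈ F := by
    refine hFac _ hbF W₂ ⟨u', [], ?_⟩
    rw [List.append_nil, hW₂_def, ← huv]
    simp [List.append_assoc]
  set q := h v' * h b with hq_def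
  have hW₂h : h W₂ = e * q * e := by
    rw [hW₂_def, hm, hm, hm, ← he_def, hq_def]
    simp [mul_assoc]
  obtain ⟨x₂, y₂, hxy⟩ := hjev W₂ hW₂F
  rw [hW₂h] at hxy
  obtain ⟨l, hl1, hle⟩ := pow_eq_idem_of_sandwich he hxy
  -- powers of the repeated block
  have hgw : h ((v' ++ b) ++ w) = q * e := by rw [hm, hm, hq_def, he_def]
  have hrep : ∀ l', h ((List.replicate l' ((v' ++ b) ++ w)).flatten) = (q * e) ^ l' := by
    intro l'
    induction l' with
    | zero => simp [h1]
    | succ t ih =>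
      rw [List.replicate_succ, List.flatten_cons, hm, ih, hgw, pow_succ']
  have hne' : (e * q * e) * e = e * q * e := by rw [mul_assoc (e * q) e e, he]
  have htele : e * (q * e) ^ l = e := by
    obtain ⟨l', rfl⟩ : ∃ l', l = l' + 1 := ⟨l - 1, by omega⟩
    have hpow_e : ∀ t, (e * q * e) ^ (t + 1) * e = (e * q * e) ^ (t + 1) :=
      pow_mul_idem hne'
    have key : ∀ t, e * (q * e) ^ (t + 1) = (e * q * e) ^ (t + 1) := by
      intro t
      induction t with
      | zero => rw [pow_one, pow_one, ← mul_assoc]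
      | succ t ih =>
        calc e * (q * e) ^ (t + 1 + 1) = (e * (q * e) ^ (t + 1)) * (q * e) := by
              rw [pow_succ, ← mul_assoc]
        _ = (e * q * e) ^ (t + 1) * (q * e) := by rw [ih]
        _ = ((e * q * e) ^ (t + 1) * e) * (q * e) := by rw [hpow_e t]
        _ = (e * q * e) ^ (t + 1) * (e * q * e) := by simp [mul_assoc]
        _ = (e * q * e) ^ (t + 1 + 1) := by rw [← pow_succ]
    rw [key l', hle]
  have hwrep : h (w ++ (List.replicate l ((v' ++ b) ++ w)).flatten) = e := by
    rw [hm, hrep, ← he_def, htele]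
  -- the word Y
  set Y := u' ++ (w ++ (List.replicate l ((v' ++ b) ++ w)).flatten) ++ v' with hY_def
  have hYX : Y ∈ X := by
    rw [hrecog, hY_def, hm, hm, hwrep]
    have hx_img : h x = h u' * e * h v' := by
      rw [← huv, hm, hm, he_def]
    rw [← hx_img]
    exact (hrecog x).1 hxX
  obtain ⟨l', rfl⟩ : ∃ l', l = l' + 1 := ⟨l - 1, by omega⟩
  have hYeq : Y = x ++ (b ++ ((List.replicate l' (w ++ (v' ++ b))).flatten ++ (w ++ v'))) := by
    rw [hY_def, ← huv, flatten_replicate_rot w (v' ++ b) (l' + 1)]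
    simp [List.replicate_succ, List.flatten_cons, List.append_assoc]
  have hpref : x <+: Y := ⟨_, hYeq.symm⟩
  have hxY : x = Y := hpc.2.2 x hxX Y hYX hpref
  have htail : (b ++ ((List.replicate l' (w ++ (v' ++ b))).flatten ++ (w ++ v'))) = [] := by
    have h2 : x ++ [] = x ++ (b ++ ((List.replicate l' (w ++ (v' ++ b))).flatten ++ (w ++ v'))) := by
      rw [List.append_nil, ← hYeq, ← hxY]
    exact (List.append_cancel_left h2).symm
  have hwnil : w = [] := by
    have h3 := (List.append_eq_nil_iff.mp htail).2
    have h4 := (List.append_eq_nil_iff.mp h3).2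
    exact (List.append_eq_nil_iff.mp h4).1
  exact hw0 hwnil

end Stmt2Aux

open PaperDefs in
theorem stmt_2 {A : Type} [Fintype A]
    (F X : Set (List A)) (hF : Recurrent F)
    (hX : IsBifixCode X) (hXF : X ⊆ F) (hrat : IsRational X) :
    FThin F X := by
  classical
  obtain ⟨σ, hσ, Mdfa, hM⟩ := hrat
  haveI := hσ
  haveI : Finite (Function.End σ) := Finite.of_equiv (σ → σ) (Equiv.refl _)
  haveI : Finite (Function.End σ)ᵐᵒᵖ := Finite.of_equiv _ MulOpposite.opEquiv
  set φ : List A → Function.End σ := fun w q => Mdfa.evalFrom q w with hφ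
  set h : List A → (Function.End σ)ᵐᵒᵖ := fun w => MulOpposite.op (φ w) with hh
  have h1 : h [] = 1 := by
    have : φ [] = 1 := by
      funext s
      exact Mdfa.evalFrom_nil s
    rw [hh]
    simp only [this, MulOpposite.op_one]
  have hm : ∀ u v : List A, h (u ++ v) = h u * h v := by
    intro u v
    have hcomp : φ (u ++ v) = φ v * φ u := by
      funext s
      exact Mdfa.evalFrom_of_append s u v
    rw [hh]
    simp only [hcomp, MulOpposite.op_mul]
  have hrecog : ∀ w : List A, w ∈ X ↔ h w ∈
      {f : (Function.End σ)ᵐᵒᵖ | (MulOpposite.unop f) Mdfa.start ∈ Mdfa.accept} := by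
    intro w
    rw [← hM w]
    exact Iff.rfl
  exact Stmt2Aux.core F X hF hX.1 hXF h h1 hm _ hrecog
end

section
/- Let A be a finite alphabet, let F ⊆ A* be a recurrent set, and let X ⊆ F be a rational bifix code. Then the F-degree d_F(X) is finite if and only if X is an F-maximal bifix code. -/
/-! Common definitions: words over a finite alphabet `A` are terms of `List A`,
concatenation being the monoid operation of the free monoid `A*`. -/

namespace PaperDefs

variable {A : Type*}

section Stmt3Aux
open PaperDefs

variable {A : Type*}

namespace Stmt3Aux

/-! ### Generic list lemmas -/

theorem infix_of_prefix_suffix {u v w : List A} (h1 : u <+: v) (h2 : v <:+ w) : u <:+: w := by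
  obtain ⟨t, rfl⟩ := h1
  obtain ⟨s, rfl⟩ := h2
  exact ⟨s, t, by simp [List.append_assoc]⟩

/-! ### InStar lemmas -/

theorem instar_nil (X : Set (List A)) : InStar X [] := ⟨[], by simp, rfl⟩

theorem instar_single {X : Set (List A)} {x : List A} (hx : x ∈ X) : InStar X x :=
  ⟨[x], by simp [hx], by simp⟩

theorem instar_append {X : Set (List A)} {u v : List A} (hu : InStar X u) (hv : InStar X v) :
    InStar X (u ++ v) := by
  obtain ⟨l, hl, rfl⟩ := hu
  obtain ⟨m, hm, rfl⟩ := hv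
  refine ⟨l ++ m, ?_, by simp⟩
  intro a ha
  rcases List.mem_append.mp ha with h | h
  · exact hl a h
  · exact hm a h

theorem instar_head {X : Set (List A)} {z : List A} (hz : InStar X z) (hne : z ≠ []) :
    ∃ x ∈ X, x <+: z := by
  obtain ⟨l, hl, rfl⟩ := hz
  cases l with
  | nil => simp at hne
  | cons a l' => exact ⟨a, hl a (by simp), ⟨l'.flatten, by simp⟩⟩

theorem flatten_unitary {X : Set (List A)} (hX : IsPrefixCode X) :
    ∀ (m l : List (List A)) (z : List A),
      (∀ a ∈ l, a ∈ X) → (∀ a ∈ m, a ∈ X) → l.flatten ++ z = m.flatten → InStar X z := by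
  intro m
  induction m with
  | nil =>
    intro l z _ _ h
    simp only [List.flatten_nil] at h
    rcases List.append_eq_nil_iff.mp h with ⟨_, rfl⟩
    exact instar_nil X
  | cons b m' ih =>
    intro l z hl hm h
    cases l with
    | nil =>
      refine ⟨b :: m', hm, ?_⟩
      simpa using h.symm
    | cons a l' =>
      simp only [List.flatten_cons, List.append_assoc] at h
      have ha : a ∈ X := hl a (by simp)
      have hb : b ∈ X := hm b (by simp)
      have hab : a <+: b ∨ b <+: a :=
        List.prefix_or_prefix_of_prefix (⟨l'.flatten ++ z, h⟩ : a <+: b ++ m'.flatten)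
          (⟨m'.flatten, rfl⟩ : b <+: b ++ m'.flatten)
      have heq : a = b := by
        rcases hab with h' | h'
        · exact hX.2.2 a ha b hb h'
        · exact (hX.2.2 b hb a ha h').symm
      subst heq
      have h' : l'.flatten ++ z = m'.flatten := by
        have := List.append_cancel_left h
        simpa using this
      exact ih l' z (fun x hx => hl x (by simp [hx])) (fun x hx => hm x (by simp [hx])) h'

theorem instar_unitary {X : Set (List A)} (hX : IsPrefixCode X) {x z : List A}
    (hx : InStar X x) (hxz : InStar X (x ++ z)) : InStar X z := by
  obtain ⟨l, hl, hlf⟩ := hx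
  obtain ⟨m, hm, hmf⟩ := hxz
  exact flatten_unitary hX m l z hl hm (by rw [hlf, hmf])

/-! ### The prefix-side and suffix-side counting sets -/

def Pset (X : Set (List A)) (w : List A) : Set (List A) :=
  {v | v <+: w ∧ ¬ ∃ s ∈ X, s <:+ v}

def Sset (X : Set (List A)) (w : List A) : Set (List A) :=
  {u | u <:+ w ∧ ¬ ∃ s ∈ X, s <+: u}

theorem pset_finite (X : Set (List A)) (w : List A) : (Pset X w).Finite := by
  refine Set.Finite.subset (Set.finite_range (fun n : Fin (w.length + 1) => w.take n.1)) ?_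
  rintro v ⟨hv, -⟩
  refine ⟨⟨v.length, by have := hv.length_le; omega⟩, ?_⟩
  exact (List.prefix_iff_eq_take.mp hv).symm

theorem sset_finite (X : Set (List A)) (w : List A) : (Sset X w).Finite := by
  refine Set.Finite.subset (Set.finite_range (fun n : Fin (w.length + 1) => w.drop n.1)) ?_
  rintro u ⟨hu, -⟩
  obtain ⟨c, rfl⟩ := hu
  refine ⟨⟨c.length, by simp⟩, ?_⟩
  simp [List.drop_left]

theorem drop_of_suffix {u w : List A} (hu : u <:+ w) :
    w.drop (w.length - u.length) = u := by
  obtain ⟨c, rfl⟩ := hu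
  have : (c ++ u).length - u.length = c.length := by simp
  rw [this, List.drop_left]

/-! ### delta = number of prefixes with no suffix in X -/

theorem delta_eq_pset {X : Set (List A)} (hX : IsPrefixCode X) (w : List A) :
    delta X w = (Pset X w).ncard := by
  classical
  have hinj : Set.InjOn (fun p : List A × List A × List A => p.1) {p | IsParse X w p} := by
    rintro ⟨v, x, u⟩ hp ⟨v', x', u'⟩ hq (heq : v = v')
    subst heq
    obtain ⟨hp1, hp2, hp3, hp4⟩ := hp
    obtain ⟨hq1, hq2, hq3, hq4⟩ := hq
    dsimp only at hp1 hp2 hp3 hp4 hq1 hq2 hq3 hq4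
    have hcan : x ++ u = x' ++ u' := by
      apply List.append_cancel_left (as := v)
      rw [← List.append_assoc, ← List.append_assoc, hp1, hq1]
    have key : ∀ (x x' u u' : List A), InStar X x → InStar X x' →
        (¬ ∃ s ∈ X, s <+: u) → x ++ u = x' ++ u' → x <+: x' → x = x' := by
      intro x x' u u' hx hx' hu hc hpre
      obtain ⟨z, rfl⟩ := hpre
      cases z with
      | nil => simp
      | cons zh zt =>
        exfalso
        have hz : InStar X (zh :: zt) := instar_unitary hX hx hx'
        obtain ⟨x₀, hx₀X, hx₀p⟩ := instar_head hz (by simp)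
        have huz : u = (zh :: zt) ++ u' := by
          apply List.append_cancel_left (as := x)
          rw [hc, List.append_assoc]
        exact hu ⟨x₀, hx₀X, huz ▸ hx₀p.trans (List.prefix_append _ _)⟩
    have hxx : x = x' := by
      have hcomp : x <+: x' ∨ x' <+: x := by
        apply List.prefix_or_prefix_of_prefix (l₃ := x' ++ u')
        · exact hcan ▸ List.prefix_append x u
        · exact List.prefix_append x' u'
      rcases hcomp with h | h
      · exact key x x' u u' hp3 hq3 hp4 hcan h
      · exact (key x' x u' u hq3 hp3 hq4 hcan.symm h).symm
    subst hxx
    have : u = u' := List.append_cancel_left hcan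
    rw [this]
  have himg : (fun p : List A × List A × List A => p.1) '' {p | IsParse X w p} = Pset X w := by
    ext v
    constructor
    · rintro ⟨⟨v', x, u⟩, hp, rfl⟩
      exact ⟨⟨x ++ u, by rw [← List.append_assoc]; exact hp.1⟩, hp.2.1⟩
    · rintro ⟨hvw, hnosuf⟩
      obtain ⟨r, hr⟩ := hvw
      set P : ℕ → Prop := fun n => InStar X (r.take n) with hP
      have h0 : P 0 := by simpa [hP] using instar_nil X
      have hPn : P (Nat.findGreatest P r.length) := Nat.findGreatest_spec (Nat.zero_le _) h0
      have hle : Nat.findGreatest P r.length ≤ r.length := Nat.findGreatest_le _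
      set n := Nat.findGreatest P r.length with hn
      refine ⟨(v, r.take n, r.drop n), ⟨?_, hnosuf, hPn, ?_⟩, rfl⟩
      · rw [List.append_assoc, List.take_append_drop, hr]
      · rintro ⟨x₀, hx₀X, hx₀p⟩
        dsimp only at hx₀p
        have hx₀ne : x₀ ≠ [] := hX.2.1 x₀ hx₀X
        have hlen : (r.take n).length = n := by
          rw [List.length_take]; omega
        have htk : r.take (n + x₀.length) = r.take n ++ x₀ := by
          conv_lhs => rw [← List.take_append_drop n r]
          rw [show n + x₀.length = (r.take n).length + x₀.length by rw [hlen],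
            List.take_length_add_append]
          congr 1
          exact (List.prefix_iff_eq_take.mp hx₀p).symm
        have hPbig : P (n + x₀.length) := by
          show InStar X (r.take (n + x₀.length))
          rw [htk]
          exact instar_append hPn (instar_single hx₀X)
        have hb : n + x₀.length ≤ r.length := by
          have := hx₀p.length_le
          rw [List.length_drop] at this
          omega
        have := Nat.le_findGreatest hb hPbig
        rw [← hn] at this
        have : x₀.length = 0 := by omega
        exact hx₀ne (List.length_eq_zero_iff.mp this)
  rw [delta, ← Set.ncard_image_of_injOn hinj, himg]

/-! ### Reversal -/

def revSet (X : Set (List A)) : Set (List A) := List.reverse '' X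

theorem mem_revSet {X : Set (List A)} {x : List A} : x ∈ revSet X ↔ x.reverse ∈ X := by
  constructor
  · rintro ⟨y, hy, rfl⟩; simpa using hy
  · intro h; exact ⟨x.reverse, h, by simp⟩

theorem revSet_prefixCode {X : Set (List A)} (hX : IsSuffixCode X) : IsPrefixCode (revSet X) := by
  obtain ⟨⟨x, hx⟩, hne, hcode⟩ := hX
  refine ⟨⟨x.reverse, mem_revSet.mpr (by simpa using hx)⟩, ?_, ?_⟩
  · intro w hw h
    exact hne w.reverse (mem_revSet.mp hw) (by simp [h])
  · intro u hu v hv hpre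
    have h1 : u.reverse <:+ v.reverse := by
      apply List.reverse_suffix.mpr hpre
    have h2 := hcode u.reverse (mem_revSet.mp hu) v.reverse (mem_revSet.mp hv) h1
    have h3 := congrArg List.reverse h2
    simpa using h3

theorem flatten_rev (l : List (List A)) :
    ((l.map List.reverse).reverse).flatten = l.flatten.reverse := by
  induction l with
  | nil => simp
  | cons a l ih => simp [List.reverse_append, ih]

theorem instar_rev {X : Set (List A)} {z : List A} (hz : InStar X z) :
    InStar (revSet X) z.reverse := by
  obtain ⟨l, hl, rfl⟩ := hz
  refine ⟨(l.map List.reverse).reverse, ?_, flatten_rev l⟩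
  intro a ha
  simp only [List.mem_reverse, List.mem_map] at ha
  obtain ⟨b, hb, rfl⟩ := ha
  exact mem_revSet.mpr (by simpa using hl b hb)

theorem isParse_rev {X : Set (List A)} {w : List A} {p : List A × List A × List A}
    (h : IsParse X w p) :
    IsParse (revSet X) w.reverse (p.2.2.reverse, p.2.1.reverse, p.1.reverse) := by
  obtain ⟨v, x, u⟩ := p
  obtain ⟨h1, h2, h3, h4⟩ := h
  dsimp only at h1 h2 h3 h4 ⊢
  refine ⟨?_, ?_, instar_rev h3, ?_⟩
  · rw [← h1]; simp [List.reverse_append, List.append_assoc]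
  · rintro ⟨s, hs, hsuf⟩
    refine h4 ⟨s.reverse, mem_revSet.mp hs, ?_⟩
    exact List.reverse_suffix.mp (by simpa using hsuf)
  · rintro ⟨s, hs, hpre⟩
    refine h2 ⟨s.reverse, mem_revSet.mp hs, ?_⟩
    exact List.reverse_prefix.mp (by simpa using hpre)

theorem revSet_revSet (X : Set (List A)) : revSet (revSet X) = X := by
  ext x
  rw [mem_revSet, mem_revSet]
  simp

theorem delta_rev (X : Set (List A)) (w : List A) :
    delta X w = delta (revSet X) w.reverse := by
  set φ : List A × List A × List A → List A × List A × List A :=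
    fun p => (p.2.2.reverse, p.2.1.reverse, p.1.reverse) with hφ
  have hφφ : ∀ p, φ (φ p) = p := by rintro ⟨v, x, u⟩; simp [hφ]
  have hinj : Function.Injective φ := by
    intro p q h
    rw [← hφφ p, ← hφφ q, h]
  have himg : φ '' {p | IsParse X w p} = {p | IsParse (revSet X) w.reverse p} := by
    ext q
    constructor
    · rintro ⟨p, hp, rfl⟩
      exact isParse_rev hp
    · intro hq
      refine ⟨φ q, ?_, hφφ q⟩
      have := isParse_rev (X := revSet X) (w := w.reverse) hq
      rw [revSet_revSet, List.reverse_reverse] at this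
      exact this
  rw [delta, delta, ← himg, Set.ncard_image_of_injective _ hinj]

theorem sset_eq_rev_pset (X : Set (List A)) (w : List A) :
    Sset X w = List.reverse '' Pset (revSet X) w.reverse := by
  ext u
  constructor
  · rintro ⟨hsuf, hnopre⟩
    refine ⟨u.reverse, ⟨?_, ?_⟩, by simp⟩
    · exact List.reverse_prefix.mpr hsuf
    · rintro ⟨s, hs, hssuf⟩
      refine hnopre ⟨s.reverse, mem_revSet.mp hs, ?_⟩
      exact List.reverse_suffix.mp (by simpa using hssuf)
  · rintro ⟨p, ⟨hpre, hnosuf⟩, rfl⟩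
    constructor
    · exact List.reverse_prefix.mp (by simpa using hpre)
    · rintro ⟨s, hs, hspre⟩
      refine hnosuf ⟨s.reverse, mem_revSet.mpr (by simpa using hs), ?_⟩
      exact List.reverse_prefix.mp (by simpa using hspre)

theorem delta_eq_sset {X : Set (List A)} (hX : IsSuffixCode X) (w : List A) :
    delta X w = (Sset X w).ncard := by
  rw [delta_rev, delta_eq_pset (revSet_prefixCode hX), sset_eq_rev_pset,
    Set.ncard_image_of_injective _ List.reverse_injective]


/-! ### Direction A : not maximal implies infinite degree -/

theorem lemA {F X : Set (List A)} (hF : Recurrent F)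
    (hX : IsBifixCode X) (hXF : X ⊆ F) (hnmax : ¬ IsFMaximalBifixCode F X) :
    Fdeg X F = ⊤ := by
  classical
  -- extract a word y that could be adjoined
  have hex : ∃ Y : Set (List A), IsBifixCode Y ∧ Y ⊆ F ∧ X ⊆ Y ∧ Y ≠ X := by
    by_contra h
    push_neg at h
    exact hnmax ⟨hX, hXF, fun Y h1 h2 h3 => h Y h1 h2 h3⟩
  obtain ⟨Y, hY, hYF, hXY, hYne⟩ := hex
  obtain ⟨y, hyY, hyX⟩ := Set.exists_of_ssubset (ssubset_of_subset_of_ne hXY hYne.symm)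
  have hyF : y ∈ F := hYF hyY
  have hyne : y ≠ [] := hY.1.2.1 y hyY
  -- no element of X is a suffix of any word ending with y
  have hkey : ∀ (α : List A) (s : List A), s ∈ X → ¬ s <:+ (α ++ y) := by
    intro α s hs hsuf
    have hy' : y <:+ α ++ y := List.suffix_append α y
    rcases List.suffix_or_suffix_of_suffix hsuf hy' with h | h
    · exact hyX (hY.2.2.2 s (hXY hs) y hyY h ▸ hs)
    · exact hyX ((hY.2.2.2 y hyY s (hXY hs) h) ▸ hs)
  -- words with unboundedly many parses
  have hz : ∀ k : ℕ, ∃ z : List A, z ∈ F ∧ (∃ α, z = α ++ y) ∧ k + 1 ≤ delta X z := by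
    intro k
    induction k with
    | zero =>
      refine ⟨y, hyF, ⟨[], by simp⟩, ?_⟩
      rw [delta_eq_pset hX.1]
      have hmem : y ∈ Pset X y := by
        refine ⟨List.prefix_refl y, ?_⟩
        rintro ⟨s, hs, hsuf⟩
        exact hkey [] s hs (by simpa using hsuf)
      have := (Set.ncard_pos (pset_finite X y)).mpr ⟨y, hmem⟩
      omega
    | succ k ih =>
      obtain ⟨z, hzF, ⟨α, hα⟩, hd⟩ := ih
      obtain ⟨s, hs⟩ := hF.2.2.2 z hzF y hyF
      refine ⟨z ++ s ++ y, hs, ⟨z ++ s, rfl⟩, ?_⟩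
      have hsub : Pset X z ⊂ Pset X (z ++ s ++ y) := by
        constructor
        · rintro v ⟨hv, hnos⟩
          exact ⟨hv.trans (by rw [List.append_assoc]; exact List.prefix_append _ _), hnos⟩
        · intro hcon
          have hmem : (z ++ s ++ y) ∈ Pset X (z ++ s ++ y) := by
            refine ⟨List.prefix_refl _, ?_⟩
            rintro ⟨t, ht, hsuf⟩
            exact hkey (z ++ s) t ht hsuf
          have := (hcon hmem).1.length_le
          simp only [List.length_append] at this
          have : y.length = 0 := by omega
          exact hyne (List.length_eq_zero_iff.mp this)
      have hlt := Set.ncard_lt_ncard hsub (pset_finite X _)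
      rw [delta_eq_pset hX.1] at hd ⊢
      omega
  by_contra htop
  obtain ⟨m, hm⟩ := WithTop.ne_top_iff_exists.mp htop
  obtain ⟨z, hzF, -, hd⟩ := hz m
  have hle : (delta X z : ℕ∞) ≤ Fdeg X F :=
    le_iSup₂ (f := fun w (_ : w ∈ F) => (delta X w : ℕ∞)) z hzF
  rw [← hm] at hle
  have : delta X z ≤ m := WithTop.coe_le_coe.mp hle
  omega


/-! ### A finite Ramsey theorem for triples -/

def RB : ℕ → ℕ
  | 0 => 2
  | (c + 1) => (c + 1) * RB c + 2

theorem RB_mono (c : ℕ) : RB c ≤ RB (c + 1) := by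
  have h1 : RB c ≤ (c + 1) * RB c := Nat.le_mul_of_pos_left _ (Nat.succ_pos c)
  show RB c ≤ (c + 1) * RB c + 2
  omega

theorem ramsey3_aux {C : Type*} [DecidableEq C] :
    ∀ (c : ℕ) (S : Finset C), S.card ≤ c → ∀ (f : ℕ → ℕ → C) (N : ℕ), RB c ≤ N →
      (∀ i j, i < j → j < N → f i j ∈ S) →
      ∃ i j k, i < j ∧ j < k ∧ k < N ∧ f i j = f j k ∧ f i j = f i k := by
  intro c
  induction c with
  | zero =>
    intro S hS f N hN hf
    have hSe : S = ∅ := Finset.card_eq_zero.mp (Nat.le_zero.mp hS)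
    have h2 : (2 : ℕ) ≤ N := hN
    have := hf 0 1 Nat.one_pos (by omega)
    rw [hSe] at this
    exact absurd this (Finset.notMem_empty _)
  | succ c ih =>
    intro S hS f N hN hf
    by_cases hc : S.card ≤ c
    · exact ih S hc f N (le_trans (RB_mono c) hN) hf
    · have hSc : S.card = c + 1 := by omega
      have hmaps : ∀ j ∈ Finset.Ico 1 N, f 0 j ∈ S := by
        intro j hj
        rw [Finset.mem_Ico] at hj
        exact hf 0 j hj.1 hj.2
      have hcard : S.card * RB c < (Finset.Ico 1 N).card := by
        rw [Nat.card_Ico, hSc]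
        have : (c + 1) * RB c + 2 ≤ N := hN
        omega
      obtain ⟨γ, hγS, hT⟩ :=
        Finset.exists_lt_card_fiber_of_mul_lt_card_of_maps_to hmaps hcard
      set T := (Finset.Ico 1 N).filter (fun j => f 0 j = γ) with hTdef
      by_cases hpair : ∃ a ∈ T, ∃ b ∈ T, a < b ∧ f a b = γ
      · obtain ⟨a, haT, b, hbT, hab, hfab⟩ := hpair
        have haI := Finset.mem_filter.mp haT
        have hbI := Finset.mem_filter.mp hbT
        have ha0 : 0 < a := (Finset.mem_Ico.mp haI.1).1
        have hbN : b < N := (Finset.mem_Ico.mp hbI.1).2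
        exact ⟨0, a, b, ha0, hab, hbN, by rw [haI.2, hfab], by rw [haI.2, hbI.2]⟩
      · push_neg at hpair
        set m := T.card with hm
        have hRm : RB c < m := hT
        set e := T.orderEmbOfFin (rfl : T.card = m) with he
        have hememT : ∀ i : Fin m, (e i : ℕ) ∈ T := fun i => T.orderEmbOfFin_mem rfl i
        set f' : ℕ → ℕ → C :=
          fun i j => if h : i < m ∧ j < m then f (e ⟨i, h.1⟩) (e ⟨j, h.2⟩) else f 0 1 with hf'
        have hunf : ∀ (i j : ℕ) (hi : i < m) (hj : j < m), f' i j = f (e ⟨i, hi⟩) (e ⟨j, hj⟩) := by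
          intro i j hi hj
          simp only [hf', dif_pos (And.intro hi hj)]
        have hecard : (S.erase γ).card ≤ c := by
          rw [Finset.card_erase_of_mem hγS, hSc]
          omega
        have hTN : ∀ i : Fin m, (e i : ℕ) < N := by
          intro i
          have := (Finset.mem_filter.mp (hememT i)).1
          exact (Finset.mem_Ico.mp this).2
        have hTγ : ∀ i : Fin m, f 0 (e i) = γ := fun i => (Finset.mem_filter.mp (hememT i)).2
        have hf'mem : ∀ i j, i < j → j < RB c → f' i j ∈ S.erase γ := by
          intro i j hij hjR
          have hi : i < m := by omega
          have hj : j < m := by omega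
          rw [hunf i j hi hj]
          have hlt : (e ⟨i, hi⟩ : ℕ) < e ⟨j, hj⟩ := by
            apply e.strictMono
            exact Fin.mk_lt_mk.mpr hij
          refine Finset.mem_erase.mpr ⟨?_, hf _ _ hlt (hTN _)⟩
          exact hpair _ (hememT ⟨i, hi⟩) _ (hememT ⟨j, hj⟩) hlt
        obtain ⟨i, j, k, hij, hjk, hkR, he1, he2⟩ :=
          ih (S.erase γ) hecard f' (RB c) le_rfl hf'mem
        have hi : i < m := by omega
        have hj : j < m := by omega
        have hk : k < m := by omega
        refine ⟨e ⟨i, hi⟩, e ⟨j, hj⟩, e ⟨k, hk⟩, ?_, ?_, hTN _, ?_, ?_⟩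
        · exact e.strictMono (Fin.mk_lt_mk.mpr hij)
        · exact e.strictMono (Fin.mk_lt_mk.mpr hjk)
        · rw [← hunf i j hi hj, ← hunf j k hj hk]; exact he1
        · rw [← hunf i j hi hj, ← hunf i k hi hk]; exact he2

theorem ramsey3 (C : Type*) [Finite C] :
    ∃ N : ℕ, ∀ f : ℕ → ℕ → C, ∃ i j k, i < j ∧ j < k ∧ k < N ∧ f i j = f j k ∧ f i j = f i k := by
  classical
  haveI := Fintype.ofFinite C
  refine ⟨RB (Fintype.card C), fun f => ?_⟩
  exact ramsey3_aux (Fintype.card C) Finset.univ (le_of_eq Finset.card_univ) f _ le_rfl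
    (fun i j _ _ => Finset.mem_univ _)


/-! ### Extraction of idempotent segments -/

theorem exists_idem_seg_pre {X : Set (List A)} {σ : Type} (M : DFA A σ) {N : ℕ}
    (hN : ∀ f : ℕ → ℕ → (σ → σ), ∃ i j k, i < j ∧ j < k ∧ k < N ∧ f i j = f j k ∧ f i j = f i k)
    {w : List A} (hcard : N < (Pset X w).ncard) :
    ∃ ζ : List A, ζ ≠ [] ∧ ζ <:+: w ∧ (¬ ∃ s ∈ X, s <:+ ζ) ∧
      (fun q => M.evalFrom q (ζ ++ ζ)) = (fun q => M.evalFrom q ζ) := by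
  classical
  set PF := (pset_finite X w).toFinset with hPF
  have hmemPF : ∀ v, v ∈ PF ↔ v ∈ Pset X w := fun v => Set.Finite.mem_toFinset _
  have hinjlen : Set.InjOn List.length (↑PF : Set (List A)) := by
    intro v1 h1 v2 h2 hl
    have h1' : v1 ∈ Pset X w := (hmemPF v1).mp (Finset.mem_coe.mp h1)
    have h2' : v2 ∈ Pset X w := (hmemPF v2).mp (Finset.mem_coe.mp h2)
    rw [List.prefix_iff_eq_take.mp h1'.1, List.prefix_iff_eq_take.mp h2'.1, hl]
  set D := PF.image List.length with hD
  have hDcard : D.card = PF.card := Finset.card_image_of_injOn hinjlen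
  have hNm : N < D.card := by
    rw [hDcard, hPF]
    rwa [Set.ncard_eq_toFinset_card _ (pset_finite X w)] at hcard
  set m := D.card with hm
  set emb := D.orderEmbOfFin (rfl : D.card = m) with hemb
  set ℓ : ℕ → ℕ := fun i => if h : i < m then emb ⟨i, h⟩ else 0 with hℓ
  have hℓmem : ∀ i, i < m → ℓ i ∈ D := by
    intro i h
    simp only [hℓ, dif_pos h]
    exact D.orderEmbOfFin_mem rfl _
  have htake : ∀ i, i < m → w.take (ℓ i) ∈ Pset X w := by
    intro i h
    obtain ⟨v, hvPF, hvlen⟩ := Finset.mem_image.mp (hℓmem i h)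
    have hv : v ∈ Pset X w := (hmemPF v).mp hvPF
    have : w.take (ℓ i) = v := by rw [← hvlen]; exact (List.prefix_iff_eq_take.mp hv.1).symm
    rw [this]; exact hv
  have hℓlt : ∀ i j, i < j → j < m → ℓ i < ℓ j := by
    intro i j hij hj
    have hi : i < m := lt_trans hij hj
    simp only [hℓ, dif_pos hi, dif_pos hj]
    exact (D.orderEmbOfFin rfl).strictMono (Fin.mk_lt_mk.mpr hij)
  have hub : ∀ i, i < m → ℓ i ≤ w.length := by
    intro i h
    obtain ⟨v, hvPF, hvlen⟩ := Finset.mem_image.mp (hℓmem i h)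
    have hv : v ∈ Pset X w := (hmemPF v).mp hvPF
    rw [← hvlen]
    exact hv.1.length_le
  set seg : ℕ → ℕ → List A := fun i j => (w.take (ℓ j)).drop (ℓ i) with hseg
  have hsplit : ∀ i j, i < j → j < m → w.take (ℓ i) ++ seg i j = w.take (ℓ j) := by
    intro i j hij hj
    have hlt' := hℓlt i j hij hj
    have h1 : (w.take (ℓ j)).take (ℓ i) = w.take (ℓ i) := by
      rw [List.take_take]
      congr 1
      omega
    conv_rhs => rw [← List.take_append_drop (ℓ i) (w.take (ℓ j))]
    rw [h1]
  have hmult : ∀ i j k, i < j → j < k → k < m → seg i j ++ seg j k = seg i k := by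
    intro i j k hij hjk hk
    have hj : j < m := lt_trans hjk hk
    apply List.append_cancel_left (as := w.take (ℓ i))
    rw [← List.append_assoc, hsplit i j hij hj, hsplit j k hjk hk, hsplit i k (lt_trans hij hjk) hk]
  obtain ⟨i, j, k, hij, hjk, hkN, he1, he2⟩ :=
    hN (fun i j => fun q => M.evalFrom q (seg i j))
  have hk : k < m := lt_trans hkN hNm
  have hj : j < m := lt_trans hjk hk
  have hi : i < m := lt_trans hij hj
  refine ⟨seg i j, ?_, ?_, ?_, ?_⟩
  · have hlen : (seg i j).length = ℓ j - ℓ i := by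
      rw [hseg]
      simp only [List.length_drop, List.length_take]
      have := hub j hj
      omega
    have := hℓlt i j hij hj
    intro hnil
    rw [hnil] at hlen
    simp at hlen
    omega
  · refine ⟨w.take (ℓ i), w.drop (ℓ j), ?_⟩
    rw [hsplit i j hij hj, List.take_append_drop]
  · rintro ⟨s, hs, hsuf⟩
    have hPj := htake j hj
    refine hPj.2 ⟨s, hs, hsuf.trans ⟨w.take (ℓ i), hsplit i j hij hj⟩⟩
  · funext q
    have hq1 : M.evalFrom q (seg i j ++ seg i j) = M.evalFrom (M.evalFrom q (seg i j)) (seg i j) :=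
      M.evalFrom_of_append q _ _
    have hq2 : M.evalFrom (M.evalFrom q (seg i j)) (seg i j)
        = M.evalFrom (M.evalFrom q (seg i j)) (seg j k) := by
      exact congrFun he1 _
    have hq3 : M.evalFrom (M.evalFrom q (seg i j)) (seg j k)
        = M.evalFrom q (seg i j ++ seg j k) := (M.evalFrom_of_append q _ _).symm
    have hq4 : M.evalFrom q (seg i j ++ seg j k) = M.evalFrom q (seg i k) := by
      rw [hmult i j k hij hjk hk]
    have hq5 : M.evalFrom q (seg i k) = M.evalFrom q (seg i j) := (congrFun he2 q).symm
    rw [hq1, hq2, hq3, hq4, hq5]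


theorem exists_idem_seg_suf {X : Set (List A)} {σ : Type} (M : DFA A σ) {N : ℕ}
    (hN : ∀ f : ℕ → ℕ → (σ → σ), ∃ i j k, i < j ∧ j < k ∧ k < N ∧ f i j = f j k ∧ f i j = f i k)
    {w : List A} (hcard : N < (Sset X w).ncard) :
    ∃ ζ : List A, ζ ≠ [] ∧ ζ <:+: w ∧ (¬ ∃ s ∈ X, s <+: ζ) ∧
      (fun q => M.evalFrom q (ζ ++ ζ)) = (fun q => M.evalFrom q ζ) := by
  classical
  set SF := (sset_finite X w).toFinset with hSF
  have hmemSF : ∀ v, v ∈ SF ↔ v ∈ Sset X w := fun v => Set.Finite.mem_toFinset _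
  have hinjlen : Set.InjOn (fun u : List A => w.length - u.length) (↑SF : Set (List A)) := by
    intro v1 h1 v2 h2 hl
    have h1' : v1 ∈ Sset X w := (hmemSF v1).mp (Finset.mem_coe.mp h1)
    have h2' : v2 ∈ Sset X w := (hmemSF v2).mp (Finset.mem_coe.mp h2)
    rw [← drop_of_suffix h1'.1, ← drop_of_suffix h2'.1]
    have hl' : w.length - v1.length = w.length - v2.length := hl
    rw [hl']
  set D := SF.image (fun u : List A => w.length - u.length) with hD
  have hDcard : D.card = SF.card := Finset.card_image_of_injOn hinjlen
  have hNm : N < D.card := by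
    rw [hDcard, hSF]
    rwa [Set.ncard_eq_toFinset_card _ (sset_finite X w)] at hcard
  set m := D.card with hm
  set emb := D.orderEmbOfFin (rfl : D.card = m) with hemb
  set κ : ℕ → ℕ := fun i => if h : i < m then emb ⟨i, h⟩ else 0 with hκ
  have hκmem : ∀ i, i < m → κ i ∈ D := by
    intro i h
    simp only [hκ, dif_pos h]
    exact D.orderEmbOfFin_mem rfl _
  have hdrop : ∀ i, i < m → w.drop (κ i) ∈ Sset X w := by
    intro i h
    obtain ⟨v, hvSF, hvlen⟩ := Finset.mem_image.mp (hκmem i h)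
    have hv : v ∈ Sset X w := (hmemSF v).mp hvSF
    have : w.drop (κ i) = v := by rw [← hvlen]; exact drop_of_suffix hv.1
    rw [this]; exact hv
  have hκlt : ∀ i j, i < j → j < m → κ i < κ j := by
    intro i j hij hj
    have hi : i < m := lt_trans hij hj
    simp only [hκ, dif_pos hi, dif_pos hj]
    exact (D.orderEmbOfFin rfl).strictMono (Fin.mk_lt_mk.mpr hij)
  have hub : ∀ i, i < m → κ i ≤ w.length := by
    intro i h
    obtain ⟨v, hvSF, hvlen⟩ := Finset.mem_image.mp (hκmem i h)
    have hvlen' : w.length - v.length = κ i := hvlen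
    omega
  set seg : ℕ → ℕ → List A := fun i j => (w.drop (κ i)).take (κ j - κ i) with hseg
  have hsplit : ∀ i j, i < j → j < m → seg i j ++ w.drop (κ j) = w.drop (κ i) := by
    intro i j hij hj
    have hi : i < m := lt_trans hij hj
    have hlt' := hκlt i j hij hj
    have h1 : (w.drop (κ i)).drop (κ j - κ i) = w.drop (κ j) := by
      rw [List.drop_drop]
      congr 1
      omega
    conv_rhs => rw [← List.take_append_drop (κ j - κ i) (w.drop (κ i))]
    rw [h1]
  have hmult : ∀ i j k, i < j → j < k → k < m → seg i j ++ seg j k = seg i k := by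
    intro i j k hij hjk hk
    have hj : j < m := lt_trans hjk hk
    apply List.append_cancel_right (bs := w.drop (κ k))
    rw [List.append_assoc, hsplit j k hjk hk, hsplit i j hij hj,
      hsplit i k (lt_trans hij hjk) hk]
  obtain ⟨i, j, k, hij, hjk, hkN, he1, he2⟩ :=
    hN (fun i j => fun q => M.evalFrom q (seg i j))
  have hk : k < m := lt_trans hkN hNm
  have hj : j < m := lt_trans hjk hk
  have hi : i < m := lt_trans hij hj
  refine ⟨seg i j, ?_, ?_, ?_, ?_⟩
  · have hlen : (seg i j).length = min (κ j - κ i) (w.length - κ i) := by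
      rw [hseg]
      simp only [List.length_take, List.length_drop]
    have h1 := hκlt i j hij hj
    have h2 := hub j hj
    intro hnil
    rw [hnil] at hlen
    simp only [List.length_nil] at hlen
    omega
  · refine ⟨w.take (κ i), w.drop (κ j), ?_⟩
    rw [List.append_assoc, hsplit i j hij hj, List.take_append_drop]
  · rintro ⟨s, hs, hpre⟩
    have hSi := hdrop i hi
    refine hSi.2 ⟨s, hs, hpre.trans ⟨w.drop (κ j), hsplit i j hij hj⟩⟩
  · funext q
    have hq1 : M.evalFrom q (seg i j ++ seg i j) = M.evalFrom (M.evalFrom q (seg i j)) (seg i j) :=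
      M.evalFrom_of_append q _ _
    have hq2 : M.evalFrom (M.evalFrom q (seg i j)) (seg i j)
        = M.evalFrom (M.evalFrom q (seg i j)) (seg j k) := congrFun he1 _
    have hq3 : M.evalFrom (M.evalFrom q (seg i j)) (seg j k)
        = M.evalFrom q (seg i j ++ seg j k) := (M.evalFrom_of_append q _ _).symm
    have hq4 : M.evalFrom q (seg i j ++ seg j k) = M.evalFrom q (seg i k) := by
      rw [hmult i j k hij hjk hk]
    have hq5 : M.evalFrom q (seg i k) = M.evalFrom q (seg i j) := (congrFun he2 q).symm
    rw [hq1, hq2, hq3, hq4, hq5]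


/-! ### Direction B : maximal implies finite degree -/

theorem lemB {F X : Set (List A)} (hF : Recurrent F)
    (hX : IsBifixCode X) (hXF : X ⊆ F) (hrat : IsRational X)
    (hmax : IsFMaximalBifixCode F X) (htop : Fdeg X F = ⊤) : False := by
  classical
  obtain ⟨σ, hσ, M, hM⟩ := hrat
  haveI : Fintype σ := hσ
  haveI : Finite (σ → σ) := inferInstance
  -- syntactic two-sided congruence from the automaton
  have hcongr : ∀ u v : List A,
      ((fun q => M.evalFrom q u) = fun q => M.evalFrom q v) →
      ∀ α β : List A, (α ++ u ++ β ∈ X ↔ α ++ v ++ β ∈ X) := by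
    intro u v huv α β
    rw [← hM, ← hM]
    rw [DFA.mem_accepts, DFA.mem_accepts]
    show M.evalFrom M.start (α ++ u ++ β) ∈ M.accept ↔
      M.evalFrom M.start (α ++ v ++ β) ∈ M.accept
    have h1 : M.evalFrom M.start (α ++ u ++ β)
        = M.evalFrom ((fun q => M.evalFrom q u) (M.evalFrom M.start α)) β := by
      rw [M.evalFrom_of_append, M.evalFrom_of_append]
    have h2 : M.evalFrom M.start (α ++ v ++ β)
        = M.evalFrom ((fun q => M.evalFrom q v) (M.evalFrom M.start α)) β := by
      rw [M.evalFrom_of_append, M.evalFrom_of_append]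
    rw [h1, h2, huv]
  -- exclusion lemmas for idempotent-valued words
  have excl1 : ∀ ζ : List A, ζ ≠ [] →
      ((fun q => M.evalFrom q (ζ ++ ζ)) = fun q => M.evalFrom q ζ) →
      ∀ α, α ++ ζ ∉ X := by
    intro ζ hne hid α hmem
    have h2 : α ++ (ζ ++ ζ) ++ [] ∈ X := by
      rw [hcongr (ζ ++ ζ) ζ hid α []]
      simpa using hmem
    rw [List.append_nil] at h2
    have hpre : α ++ ζ <+: α ++ (ζ ++ ζ) := by
      rw [← List.append_assoc]; exact List.prefix_append _ _
    have heq := hX.1.2.2 _ hmem _ h2 hpre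
    have hl := congrArg List.length heq
    simp only [List.length_append] at hl
    have : ζ.length = 0 := by omega
    exact hne (List.length_eq_zero_iff.mp this)
  have excl2 : ∀ ζ : List A, ζ ≠ [] →
      ((fun q => M.evalFrom q (ζ ++ ζ)) = fun q => M.evalFrom q ζ) →
      ∀ β, ζ ++ β ∉ X := by
    intro ζ hne hid β hmem
    have h2 : [] ++ (ζ ++ ζ) ++ β ∈ X := by
      rw [hcongr (ζ ++ ζ) ζ hid [] β]
      simpa using hmem
    simp only [List.nil_append] at h2
    have hsuf : ζ ++ β <:+ (ζ ++ ζ) ++ β := by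
      rw [List.append_assoc]; exact List.suffix_append _ _
    have heq := hX.2.2.2 _ hmem _ h2 hsuf
    have hl := congrArg List.length heq
    simp only [List.length_append] at hl
    have : ζ.length = 0 := by omega
    exact hne (List.length_eq_zero_iff.mp this)
  -- get a word with more than N parses
  obtain ⟨N, hN⟩ := ramsey3 (σ → σ)
  have hub : ∀ n : ℕ, ∃ w ∈ F, n < delta X w := by
    intro n
    by_contra h
    push_neg at h
    have : Fdeg X F ≤ (n : ℕ∞) := by
      apply iSup₂_le
      intro w hw
      exact_mod_cast h w hw
    rw [htop] at this
    exact absurd this (by simp)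
  obtain ⟨w, hwF, hdw⟩ := hub N
  have hP : N < (Pset X w).ncard := by rwa [delta_eq_pset hX.1] at hdw
  have hS : N < (Sset X w).ncard := by rwa [delta_eq_sset hX.2] at hdw
  obtain ⟨ζ, hζne, hζinf, hζnos, hζid⟩ := exists_idem_seg_pre M hN hP
  obtain ⟨ζ', hζ'ne, hζ'inf, hζ'nop, hζ'id⟩ := exists_idem_seg_suf M hN hS
  have hζF : ζ ∈ F := hF.1 w hwF ζ hζinf
  have hζ'F : ζ' ∈ F := hF.1 w hwF ζ' hζ'inf
  -- glue them into a word that could be adjoined to X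
  obtain ⟨s, hyF⟩ := hF.2.2.2 ζ' hζ'F ζ hζF
  set y := ζ' ++ s ++ ζ with hy
  have hζ'pre : ζ' <+: y := by
    rw [hy, List.append_assoc]; exact List.prefix_append _ _
  have hζsuf : ζ <:+ y := List.suffix_append _ _
  have hyne : y ≠ [] := by
    rw [hy]
    intro h
    rcases List.append_eq_nil_iff.mp h with ⟨-, h2⟩
    exact hζne h2
  have hynoXpre : ¬ ∃ x ∈ X, x <+: y := by
    rintro ⟨x, hxX, hxp⟩
    rcases List.prefix_or_prefix_of_prefix hxp hζ'pre with h | h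
    · exact hζ'nop ⟨x, hxX, h⟩
    · obtain ⟨β, rfl⟩ := h
      exact excl2 ζ' hζ'ne hζ'id β hxX
  have hynoXsuf : ¬ ∃ x ∈ X, x <:+ y := by
    rintro ⟨x, hxX, hxs⟩
    rcases List.suffix_or_suffix_of_suffix hxs hζsuf with h | h
    · exact hζnos ⟨x, hxX, h⟩
    · obtain ⟨α, rfl⟩ := h
      exact excl1 ζ hζne hζid α hxX
  have hyX : y ∉ X := fun h => hynoXpre ⟨y, h, List.prefix_refl y⟩
  -- X ∪ {y} is again a bifix code contained in F
  have hbifix : IsBifixCode (insert y X) := by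
    constructor
    · refine ⟨⟨y, Set.mem_insert y X⟩, ?_, ?_⟩
      · rintro u (rfl | hu)
        · exact hyne
        · exact hX.1.2.1 u hu
      · rintro u (rfl | hu) v (rfl | hv) hpre
        · rfl
        · exfalso
          obtain ⟨β, rfl⟩ := hζ'pre.trans hpre
          exact excl2 ζ' hζ'ne hζ'id _ hv
        · exact absurd ⟨u, hu, hpre⟩ hynoXpre
        · exact hX.1.2.2 u hu v hv hpre
    · refine ⟨⟨y, Set.mem_insert y X⟩, ?_, ?_⟩
      · rintro u (rfl | hu)
        · exact hyne
        · exact hX.2.2.1 u hu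
      · rintro u (rfl | hu) v (rfl | hv) hsuf
        · rfl
        · exfalso
          obtain ⟨α, rfl⟩ := hζsuf.trans hsuf
          exact excl1 ζ hζne hζid _ hv
        · exact absurd ⟨u, hu, hsuf⟩ hynoXsuf
        · exact hX.2.2.2 u hu v hv hsuf
  have hsubF : insert y X ⊆ F := Set.insert_subset hyF hXF
  have heq := hmax.2.2 (insert y X) hbifix hsubF (Set.subset_insert y X)
  have : y ∈ X := heq ▸ Set.mem_insert y X
  exact hyX this

end Stmt3Aux
end Stmt3Aux


end PaperDefs
open PaperDefs in
theorem stmt_3 {A : Type} [Fintype A]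
    (F X : Set (List A)) (hF : Recurrent F)
    (hX : IsBifixCode X) (hXF : X ⊆ F) (hrat : IsRational X) :
    Fdeg X F ≠ ⊤ ↔ IsFMaximalBifixCode F X := by
  constructor
  · intro h
    by_contra hnmax
    exact h (Stmt3Aux.lemA hF hX hXF hnmax)
  · intro hmax htop
    exact Stmt3Aux.lemB hF hX hXF hrat hmax htop
end

section
/- Let A be a finite alphabet, let F ⊆ A* be a factorial set, and let X be a rational subset of F whose F-degree d = d_F(X) is finite. Then there exist a finite monoid M and a monoid homomorphism φ : A* → M such that for all u, v ∈ F, φ(u) = φ(v) implies δ_X(u) = δ_X(v). (Equivalently, the map δ_X : F → {1, …, d} is uniformly continuous with respect to the profinite uniformity on A*, i.e., it extends continuously to the closure of F in the free profinite monoid over A, with {1, …, d} discrete.) -/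
namespace Stmt4Aux
open PaperDefs Finset
open scoped Classical

variable {A : Type} {σ : Type} [Fintype σ]

/-! ### InStar lemmas -/

lemma instar_nil (X : Set (List A)) : InStar X [] := ⟨[], by simp, rfl⟩

lemma instar_single {X : Set (List A)} {x : List A} (hx : x ∈ X) : InStar X x :=
  ⟨[x], by simp [hx], by simp⟩

lemma instar_append {X : Set (List A)} {u v : List A} :
    InStar X u → InStar X v → InStar X (u ++ v) := by
  rintro ⟨l, hl, rfl⟩ ⟨m, hm, rfl⟩
  refine ⟨l ++ m, ?_, by simp [List.flatten_append]⟩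
  intro a ha
  rcases List.mem_append.1 ha with h | h
  · exact hl a h
  · exact hm a h

lemma instar_destruct_left {X : Set (List A)} {m : List A} (h : InStar X m) (hm : m ≠ []) :
    ∃ x t, x ∈ X ∧ InStar X t ∧ m = x ++ t := by
  obtain ⟨l, hl, rfl⟩ := h
  cases l with
  | nil => simp at hm
  | cons hd tl =>
    exact ⟨hd, tl.flatten, hl hd (by simp), ⟨tl, fun u hu => hl u (by simp [hu]), rfl⟩,
      by simp [List.flatten_cons]⟩

lemma instar_destruct {X : Set (List A)} {m : List A} (h : InStar X m) (hm : m ≠ []) :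
    ∃ x r, InStar X x ∧ r ∈ X ∧ m = x ++ r := by
  obtain ⟨l, hl, rfl⟩ := h
  have hlne : l ≠ [] := by rintro rfl; simp at hm
  refine ⟨l.dropLast.flatten, l.getLast hlne, ⟨l.dropLast, ?_, rfl⟩, hl _ (List.getLast_mem hlne), ?_⟩
  · exact fun u hu => hl u ((l.dropLast_prefix).subset hu)
  · conv_lhs => rw [← List.dropLast_append_getLast hlne]
    simp [List.flatten_append]

lemma flatten_split (X : Set (List A)) :
    ∀ (l : List (List A)) (a b : List A), (∀ u ∈ l, u ∈ X) → l.flatten = a ++ b →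
    ∃ m z1 z2 m', InStar X m ∧ InStar X m' ∧ a = m ++ z1 ∧ b = z2 ++ m' ∧
      (z1 ++ z2 ∈ X ∨ (z1 = [] ∧ z2 = [])) := by
  intro l
  induction l with
  | nil =>
    intro a b _ hfl
    obtain ⟨rfl, rfl⟩ : a = [] ∧ b = [] := List.append_eq_nil_iff.1 (by simpa using hfl.symm)
    exact ⟨[], [], [], [], instar_nil X, instar_nil X, by simp, by simp, Or.inr ⟨rfl, rfl⟩⟩
  | cons hd tl ih =>
    intro a b hl hfl
    have hfl' : hd ++ tl.flatten = a ++ b := by simpa [List.flatten_cons] using hfl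
    rcases List.append_eq_append_iff.1 hfl' with ⟨a', ha, hb⟩ | ⟨c', hc, hb⟩
    · -- a = hd ++ a', tl.flatten = a' ++ b
      obtain ⟨m, z1, z2, m', hm, hm', hae, hbe, hzz⟩ :=
        ih a' b (fun u hu => hl u (by simp [hu])) hb
      exact ⟨hd ++ m, z1, z2, m', instar_append (instar_single (hl hd (by simp))) hm, hm',
        by rw [ha, hae, List.append_assoc], hbe, hzz⟩
    · -- hd = a ++ c', b = c' ++ tl.flatten
      exact ⟨[], a, c', tl.flatten, instar_nil X,
        ⟨tl, fun u hu => hl u (by simp [hu]), rfl⟩, by simp, hb,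
        Or.inl (by rw [← hc]; exact hl hd (by simp))⟩

lemma instar_split {X : Set (List A)} {a b : List A} (h : InStar X (a ++ b)) :
    ∃ m z1 z2 m', InStar X m ∧ InStar X m' ∧ a = m ++ z1 ∧ b = z2 ++ m' ∧
      (z1 ++ z2 ∈ X ∨ (z1 = [] ∧ z2 = [])) := by
  obtain ⟨l, hl, hfl⟩ := h
  exact flatten_split X l a b hl hfl

/-! ### The three automata layers -/

section Automata

variable (M : DFA A σ) (X : Set (List A))

/-- Layer 1: tracking the set of states reached by suffixes. -/
def sufSet (w : List A) : Set σ := {q | ∃ s, s <:+ w ∧ q = M.evalFrom M.start s}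

def T1 (w : List A) (S : Set σ) : Set σ := ((fun p => M.evalFrom p w) '' S) ∪ sufSet M w

def acc1 (S : Set σ) : Prop := ∀ q ∈ S, q ∉ M.accept

/-- Layer 2: subset automaton for `X*`. -/
def genE (S : Set σ) (w : List A) : Set σ :=
  ((fun p => M.evalFrom p w) '' S) ∪
  {q | ∃ x1 x2 r, w = x1 ++ (x2 ++ r) ∧ (∃ p ∈ S, M.evalFrom p x1 ∈ M.accept) ∧
        InStar X x2 ∧ q = M.evalFrom M.start r}

def T2 (w : List A) (s : Set σ × Prop) : Set σ × Prop := (genE M X s.1 w, s.2 ∧ w = [])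

def start2 : Set σ × Prop := ({M.start}, True)

def acc2 (s : Set σ × Prop) : Prop := s.2 ∨ ∃ q ∈ s.1, q ∈ M.accept

/-- Layer 3: prefix-killing automaton. -/
noncomputable def T3 (w : List A) : Option σ → Option σ
  | none => none
  | some q => if ∃ i < w.length, M.evalFrom q (w.take i) ∈ M.accept then none
              else some (M.evalFrom q w)

def start3 : Option σ := some M.start

def acc3 : Option σ → Prop
  | none => False
  | some q => q ∉ M.accept

variable {M X}

lemma mem_of_accept (hM : ∀ w, w ∈ M.accepts ↔ w ∈ X) {s : List A}
    (h : M.evalFrom M.start s ∈ M.accept) : s ∈ X := (hM s).1 h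

lemma accept_of_mem (hM : ∀ w, w ∈ M.accepts ↔ w ∈ X) {s : List A}
    (h : s ∈ X) : M.evalFrom M.start s ∈ M.accept := (hM s).2 h

lemma sufSet_append (u v : List A) :
    sufSet M (u ++ v) = (fun q => M.evalFrom q v) '' sufSet M u ∪ sufSet M v := by
  ext q
  simp only [sufSet, Set.mem_union, Set.mem_image, Set.mem_setOf_eq]
  constructor
  · rintro ⟨s, ⟨t, ht⟩, rfl⟩
    rcases List.append_eq_append_iff.1 ht with ⟨a', ha, hs⟩ | ⟨c', hc, hv⟩
    · -- u = t ++ a', s = a' ++ v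
      exact Or.inl ⟨M.evalFrom M.start a', ⟨a', ⟨t, ha.symm⟩, rfl⟩,
        by rw [hs, M.evalFrom_of_append]⟩
    · -- t = u ++ c', v = c' ++ s
      exact Or.inr ⟨s, ⟨c', hv.symm⟩, rfl⟩
  · rintro (⟨q0, ⟨s, ⟨t, ht⟩, rfl⟩, rfl⟩ | ⟨s, ⟨t, ht⟩, rfl⟩)
    · exact ⟨s ++ v, ⟨t, by rw [← List.append_assoc, ht]⟩, (M.evalFrom_of_append M.start s v).symm⟩
    · exact ⟨s, ⟨u ++ t, by rw [List.append_assoc, ht]⟩, rfl⟩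

lemma T1_append (u v : List A) (S : Set σ) : T1 M (u ++ v) S = T1 M v (T1 M u S) := by
  simp only [T1, Set.image_union, Set.image_image, sufSet_append, Set.union_assoc]
  congr 1
  ext q
  simp [M.evalFrom_of_append]

lemma T3_append (u v : List A) (s : Option σ) : T3 M (u ++ v) s = T3 M v (T3 M u s) := by
  cases s with
  | none => rfl
  | some q =>
    by_cases h1 : ∃ i < u.length, M.evalFrom q (u.take i) ∈ M.accept
    · have h1' : ∃ i < (u ++ v).length, M.evalFrom q ((u ++ v).take i) ∈ M.accept := by
        obtain ⟨i, hi, hacc⟩ := h1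
        exact ⟨i, by simp; omega, by rwa [List.take_append_of_le_length (le_of_lt hi)]⟩
      simp only [T3, if_pos h1, if_pos h1']
    · have hTu : T3 M u (some q) = some (M.evalFrom q u) := by simp only [T3, if_neg h1]
      rw [hTu]
      by_cases h2 : ∃ j < v.length, M.evalFrom (M.evalFrom q u) (v.take j) ∈ M.accept
      · have h2' : ∃ i < (u ++ v).length, M.evalFrom q ((u ++ v).take i) ∈ M.accept := by
          obtain ⟨j, hj, hacc⟩ := h2
          refine ⟨u.length + j, by simp; omega, ?_⟩
          rw [List.take_length_add_append, M.evalFrom_of_append]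
          exact hacc
        simp only [T3, if_pos h2, if_pos h2']
      · have h2' : ¬ ∃ i < (u ++ v).length, M.evalFrom q ((u ++ v).take i) ∈ M.accept := by
          rintro ⟨i, hi, hacc⟩
          rcases lt_or_ge i u.length with h | h
          · exact h1 ⟨i, h, by rwa [List.take_append_of_le_length (le_of_lt h)] at hacc⟩
          · refine h2 ⟨i - u.length, by simp at hi; omega, ?_⟩
            have : i = u.length + (i - u.length) := by omega
            rw [this, List.take_length_add_append, M.evalFrom_of_append] at hacc
            exact hacc
        simp only [T3, if_neg h2, if_neg h2', M.evalFrom_of_append]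

lemma T3_nil (s : Option σ) : T3 M [] s = s := by
  cases s with
  | none => rfl
  | some q => simp [T3]

lemma genE_append (hM : ∀ w, w ∈ M.accepts ↔ w ∈ X) (S : Set σ) (u v : List A) :
    genE M X S (u ++ v) = genE M X (genE M X S u) v := by
  ext q
  simp only [genE, Set.mem_union, Set.mem_image, Set.mem_setOf_eq]
  constructor
  · rintro (⟨p, hp, rfl⟩ | ⟨x1, x2, r, heq, ⟨p, hp, hacc⟩, hx2, rfl⟩)
    · exact Or.inl ⟨M.evalFrom p u, Or.inl ⟨p, hp, rfl⟩, (M.evalFrom_of_append p u v).symm⟩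
    · rcases List.append_eq_append_iff.1 heq with ⟨a', hx1, hv⟩ | ⟨c', hu, hrest⟩
      · -- x1 = u ++ a', v = a' ++ (x2 ++ r)
        right
        refine ⟨a', x2, r, hv, ⟨M.evalFrom p u, Or.inl ⟨p, hp, rfl⟩, ?_⟩, hx2, rfl⟩
        rw [← M.evalFrom_of_append, ← hx1]; exact hacc
      · -- u = x1 ++ c', x2 ++ r = c' ++ v
        rcases List.append_eq_append_iff.1 hrest with ⟨a2, hc', hr⟩ | ⟨c2, hx2e, hv⟩
        · -- c' = x2 ++ a2, r = a2 ++ v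
          left
          refine ⟨M.evalFrom M.start a2, Or.inr ⟨x1, x2, a2, ?_, ⟨p, hp, hacc⟩, hx2, rfl⟩, ?_⟩
          · rw [hu, hc']
          · rw [hr, M.evalFrom_of_append]
        · -- x2 = c' ++ c2, v = c2 ++ r
          right
          obtain ⟨m, z1, z2, m', hm, hm', hce, hc2e, hzz⟩ := instar_split (hx2e ▸ hx2)
          rcases hzz with hzz | ⟨hz1, hz2⟩
          · refine ⟨z2, m', r, ?_, ⟨M.evalFrom M.start z1,
              Or.inr ⟨x1, m, z1, ?_, ⟨p, hp, hacc⟩, hm, rfl⟩, ?_⟩, hm', rfl⟩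
            · rw [hv, hc2e, List.append_assoc]
            · rw [hu, hce]
            · rw [← M.evalFrom_of_append]; exact accept_of_mem hM hzz
          · subst hz1; subst hz2
            simp only [List.append_nil] at hce
            simp only [List.nil_append] at hc2e
            by_cases hmnil : m = []
            · refine ⟨[], m', r, ?_, ⟨M.evalFrom p u, Or.inl ⟨p, hp, rfl⟩, ?_⟩, hm', rfl⟩
              · rw [hv, hc2e]; simp
              · have hux : u = x1 := by rw [hu, hce, hmnil]; simp
                simpa [hux] using hacc
            · obtain ⟨x, rX, hxstar, hrX, hmeq⟩ := instar_destruct hm hmnil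
              refine ⟨[], m', r, ?_, ⟨M.evalFrom M.start rX,
                Or.inr ⟨x1, x, rX, ?_, ⟨p, hp, hacc⟩, hxstar, rfl⟩, ?_⟩, hm', rfl⟩
              · rw [hv, hc2e]; simp
              · rw [hu, hce, hmeq]
              · simpa using accept_of_mem hM hrX
  · rintro (⟨p', hp', rfl⟩ | ⟨y1, y2, r', heq, ⟨p', hp', hacc⟩, hy2, rfl⟩)
    · rcases hp' with ⟨p, hp, rfl⟩ | ⟨x1, x2, r1, hueq, ⟨p, hp, hacc⟩, hx2, rfl⟩
      · exact Or.inl ⟨p, hp, (M.evalFrom_of_append p u v)⟩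
      · right
        refine ⟨x1, x2, r1 ++ v, ?_, ⟨p, hp, hacc⟩, hx2, ?_⟩
        · rw [hueq]; simp [List.append_assoc]
        · rw [M.evalFrom_of_append]
    · rcases hp' with ⟨p, hp, rfl⟩ | ⟨x1, x2, r1, hueq, ⟨p, hp, hacc0⟩, hx2, rfl⟩
      · right
        refine ⟨u ++ y1, y2, r', ?_, ⟨p, hp, ?_⟩, hy2, rfl⟩
        · rw [heq]; simp [List.append_assoc]
        · rw [M.evalFrom_of_append]; exact hacc
      · right
        have hr1y1 : r1 ++ y1 ∈ X := by
          apply mem_of_accept hM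
          rw [M.evalFrom_of_append]; exact hacc
        refine ⟨x1, x2 ++ ((r1 ++ y1) ++ y2), r', ?_, ⟨p, hp, hacc0⟩, ?_, rfl⟩
        · rw [hueq, heq]; simp [List.append_assoc]
        · exact instar_append hx2 (instar_append (instar_single hr1y1) hy2)

lemma T2_append (hM : ∀ w, w ∈ M.accepts ↔ w ∈ X) (u v : List A) (s : Set σ × Prop) :
    T2 M X (u ++ v) s = T2 M X v (T2 M X u s) := by
  simp only [T2, genE_append hM]
  refine Prod.ext rfl ?_
  simp only [eq_iff_iff, List.append_eq_nil_iff]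
  tauto

lemma T2_nil_start2 : T2 M X [] (start2 M) = start2 M := by
  simp only [T2, start2, genE]
  refine Prod.ext ?_ (by simp)
  ext q
  constructor
  · rintro (⟨p, hp, rfl⟩ | ⟨x1, x2, r, heq, ⟨p, hp, hacc⟩, hx2, rfl⟩)
    · simp only [Set.mem_singleton_iff] at hp ⊢
      simp [hp]
    · obtain ⟨h1, h2⟩ := List.append_eq_nil_iff.1 heq.symm
      obtain ⟨h3, h4⟩ := List.append_eq_nil_iff.1 h2
      simp [h4]
  · intro hq
    exact Or.inl ⟨q, hq, by simp⟩

/-! ### Correctness of the three layers -/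

lemma noSuffix_iff_acc1 (hM : ∀ w, w ∈ M.accepts ↔ w ∈ X) (v : List A) :
    (¬ ∃ s ∈ X, s <:+ v) ↔ acc1 M (T1 M v ∅) := by
  simp only [T1, Set.image_empty, Set.empty_union, acc1, sufSet, Set.mem_setOf_eq]
  constructor
  · rintro h q ⟨s, hs, rfl⟩ hacc
    exact h ⟨s, mem_of_accept hM hacc, hs⟩
  · rintro h ⟨s, hsX, hs⟩
    exact h _ ⟨s, hs, rfl⟩ (accept_of_mem hM hsX)

lemma noPrefix_iff_acc3 (hM : ∀ w, w ∈ M.accepts ↔ w ∈ X) (u : List A) :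
    (¬ ∃ s ∈ X, s <+: u) ↔ acc3 M (T3 M u (start3 M)) := by
  have hpre : (∃ s ∈ X, s <+: u) ↔ ∃ i ≤ u.length, u.take i ∈ X := by
    constructor
    · rintro ⟨s, hsX, hs⟩
      refine ⟨s.length, hs.length_le, ?_⟩
      rw [← List.prefix_iff_eq_take.1 hs]; exact hsX
    · rintro ⟨i, _, hi⟩
      exact ⟨u.take i, hi, List.take_prefix i u⟩
  rw [not_iff_comm]
  simp only [start3, T3]
  by_cases h1 : ∃ i < u.length, M.evalFrom M.start (u.take i) ∈ M.accept
  · simp only [if_pos h1, acc3]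
    obtain ⟨i, hi, hacc⟩ := h1
    simp only [not_false_iff, true_iff]
    exact hpre.2 ⟨i, le_of_lt hi, mem_of_accept hM hacc⟩
  · simp only [if_neg h1, acc3, not_not]
    rw [hpre]
    constructor
    · intro hacc
      exact ⟨u.length, le_refl _, by rw [List.take_length]; exact mem_of_accept hM hacc⟩
    · rintro ⟨i, hi, hiX⟩
      rcases lt_or_eq_of_le hi with h | h
      · exact absurd ⟨i, h, accept_of_mem hM hiX⟩ h1
      · rw [h, List.take_length] at hiX
        exact accept_of_mem hM hiX

lemma instar_iff_acc2 (hM : ∀ w, w ∈ M.accepts ↔ w ∈ X) (m : List A) :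
    InStar X m ↔ acc2 M (T2 M X m (start2 M)) := by
  simp only [T2, start2, acc2]
  constructor
  · intro h
    by_cases hm : m = []
    · exact Or.inl ⟨trivial, hm⟩
    · right
      obtain ⟨x, t, hxX, ht, rfl⟩ := instar_destruct_left h hm
      by_cases htnil : t = []
      · subst htnil
        refine ⟨M.evalFrom M.start (x ++ []), Or.inl ⟨M.start, rfl, rfl⟩, ?_⟩
        simpa using accept_of_mem hM hxX
      · obtain ⟨y, r, hy, hrX, rfl⟩ := instar_destruct ht htnil
        refine ⟨M.evalFrom M.start r, Or.inr ⟨x, y, r, rfl, ⟨M.start, rfl, accept_of_mem hM hxX⟩, hy, rfl⟩, ?_⟩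
        exact accept_of_mem hM hrX
  · rintro (⟨-, hm⟩ | ⟨q, hq, hacc⟩)
    · rw [hm]; exact instar_nil X
    · rcases hq with ⟨p, hp, rfl⟩ | ⟨x1, x2, r, heq, ⟨p, hp, hacc1⟩, hx2, rfl⟩
      · simp only [Set.mem_singleton_iff] at hp
        subst hp
        exact instar_single (mem_of_accept hM hacc)
      · simp only [Set.mem_singleton_iff] at hp
        subst hp
        rw [heq]
        exact instar_append (instar_single (mem_of_accept hM hacc1))
          (instar_append hx2 (instar_single (mem_of_accept hM hacc)))

end Automata
/-! ### Indicator and capping lemmas -/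

noncomputable def ind (c : Prop) : ℕ := if c then 1 else 0

lemma ind_pos {c : Prop} (h : c) : ind c = 1 := by rw [ind, if_pos h]

lemma ind_neg {c : Prop} (h : ¬ c) : ind c = 0 := by rw [ind, if_neg h]

lemma ind_congr {c d : Prop} (h : c ↔ d) : ind c = ind d := by
  unfold ind; exact if_congr h rfl rfl

lemma ind_mul_ind (c d : Prop) : ind c * ind d = ind (c ∧ d) := by
  by_cases hc : c <;> by_cases hd : d <;>
    simp [ind_pos, ind_neg, hc, hd]

lemma ite_eq_ind (c : Prop) [Decidable c] : (if c then 1 else 0 : ℕ) = ind c := by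
  by_cases h : c
  · rw [if_pos h, ind_pos h]
  · rw [if_neg h, ind_neg h]

lemma cap_add_left (N a b : ℕ) : min (a + b) N = min (min a N + b) N := by omega

lemma cap_add_right (N a b : ℕ) : min (a + b) N = min (a + min b N) N := by omega

lemma cap_add3 (N a b c : ℕ) : min (a + (b + c)) N = min (min a N + (min b N + c)) N := by omega

lemma cap_add3_right (N a b c : ℕ) : min (a + (b + c)) N = min (a + (b + min c N)) N := by omega

lemma cap_mul (N a b : ℕ) : min (a * b) N = min (min a N * min b N) N := by
  rcases Nat.le_total a N with ha | ha
  · rcases Nat.le_total b N with hb | hb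
    · rw [min_eq_left ha, min_eq_left hb]
    · rw [min_eq_left ha, min_eq_right hb]
      rcases Nat.eq_zero_or_pos a with rfl | hpos
      · simp
      · have h1 : N ≤ a * b := le_trans hb (Nat.le_mul_of_pos_left b hpos)
        have h2 : N ≤ a * N := Nat.le_mul_of_pos_left N hpos
        rw [min_eq_right h1, min_eq_right h2]
  · rw [min_eq_right ha]
    rcases Nat.eq_zero_or_pos b with rfl | hpos
    · simp
    · have hbN : 0 < min b N ∨ N = 0 := by omega
      rcases hbN with hbN | rfl
      · have h1 : N ≤ a * b := le_trans ha (Nat.le_mul_of_pos_right a hpos)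
        have h2 : N ≤ N * min b N := Nat.le_mul_of_pos_right N hbN
        rw [min_eq_right h1, min_eq_right h2]
      · simp

lemma cap_ind_mul (N : ℕ) (c : Prop) (x : ℕ) : min (ind c * x) N = ind c * min x N := by
  by_cases h : c
  · rw [ind_pos h, one_mul, one_mul]
  · rw [ind_neg h, zero_mul, zero_mul, Nat.min_eq_left (Nat.zero_le N)]

lemma cap_sum {ι : Type*} (N : ℕ) (s : Finset ι) (f : ι → ℕ) :
    min (∑ i ∈ s, f i) N = min (∑ i ∈ s, min (f i) N) N := by
  by_cases h : ∀ i ∈ s, f i ≤ N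
  · congr 1
    exact Finset.sum_congr rfl fun i hi => (min_eq_left (h i hi)).symm
  · push_neg at h
    obtain ⟨i, hi, hN⟩ := h
    have h1 : N ≤ ∑ j ∈ s, f j :=
      le_trans (le_of_lt hN) (Finset.single_le_sum (fun _ _ => Nat.zero_le _) hi)
    have h2 : N ≤ ∑ j ∈ s, min (f j) N := by
      calc N = min (f i) N := (min_eq_right (le_of_lt hN)).symm
        _ ≤ _ := Finset.single_le_sum (f := fun j => min (f j) N)
          (fun _ _ => Nat.zero_le _) hi
    rw [min_eq_right h1, min_eq_right h2]

/-- The main regrouping lemma. -/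
lemma regroup {ι β : Type*} [Fintype β] (s : Finset ι) (f : ι → β) (P : ι → Prop)
    (Q : β → Prop) (w : ι → ℕ) :
    ∑ i ∈ s, ind (P i ∧ Q (f i)) * w i
      = ∑ b : β, ind (Q b) * (∑ i ∈ s, ind (P i ∧ f i = b) * w i) := by
  have h1 : ∀ b : β, ind (Q b) * (∑ i ∈ s, ind (P i ∧ f i = b) * w i)
      = ∑ i ∈ s, ind (P i ∧ f i = b ∧ Q b) * w i := by
    intro b
    by_cases hQ : Q b
    · rw [ind_pos hQ, one_mul]
      refine Finset.sum_congr rfl fun i _ => ?_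
      rw [ind_congr (show (P i ∧ f i = b) ↔ (P i ∧ f i = b ∧ Q b) by tauto)]
    · rw [ind_neg hQ, zero_mul, eq_comm]
      refine Finset.sum_eq_zero fun i _ => ?_
      rw [ind_neg (by tauto), zero_mul]
  simp only [h1]
  rw [Finset.sum_comm]
  refine Finset.sum_congr rfl fun i _ => ?_
  rw [Finset.sum_eq_single (f i)]
  · rw [ind_congr (show (P i ∧ f i = f i ∧ Q (f i)) ↔ (P i ∧ Q (f i)) by tauto)]
  · intro b _ hb
    rw [ind_neg, zero_mul]
    rintro ⟨-, h, -⟩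
    exact hb h.symm
  · intro h; exact absurd (Finset.mem_univ _) h

/-! ### The counting functions -/

section Counts

open Finset

variable (M : DFA A σ) (X : Set (List A))

noncomputable def Gs (w : List A) (p : Set σ) (q : Set σ × Prop) : ℕ :=
  ∑ i ∈ range w.length,
    ind (acc1 M (T1 M (w.take i) p) ∧ T2 M X (w.drop i) (start2 M) = q) * 1

noncomputable def Ac (w : List A) (p : Set σ) : ℕ :=
  ∑ i ∈ range (w.length + 1),
    ind (acc1 M (T1 M (w.take i) p) ∧ acc2 M (T2 M X (w.drop i) (start2 M))) * 1

noncomputable def Cs (w : List A) (q : Set σ × Prop) (r : Option σ) : ℕ :=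
  ∑ j ∈ range w.length,
    ind (acc2 M (T2 M X (w.take j) q) ∧ T3 M (w.drop j) (start3 M) = r) * 1

noncomputable def Bs (w : List A) (p : Set σ) (r : Option σ) : ℕ :=
  ∑ j ∈ range w.length,
    ind (T3 M (w.drop j) (start3 M) = r) * Ac M X (w.take j) p

variable {M X}

lemma Gs_append (hM : ∀ w, w ∈ M.accepts ↔ w ∈ X) (u v : List A) (p : Set σ) (q : Set σ × Prop) :
    Gs M X (u ++ v) p q
      = (∑ q' : Set σ × Prop, ind (T2 M X v q' = q) * Gs M X u p q')
        + Gs M X v (T1 M u p) q := by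
  unfold Gs
  rw [List.length_append, Finset.sum_range_add]
  congr 1
  · have step : ∀ i ∈ range u.length,
        ind (acc1 M (T1 M ((u ++ v).take i) p) ∧ T2 M X ((u ++ v).drop i) (start2 M) = q) * 1
        = ind (acc1 M (T1 M (u.take i) p)
            ∧ T2 M X v (T2 M X (u.drop i) (start2 M)) = q) * 1 := by
      intro i hi
      rw [Finset.mem_range] at hi
      rw [List.take_append_of_le_length (le_of_lt hi),
        List.drop_append_of_le_length (le_of_lt hi), T2_append hM]
    refine (Finset.sum_congr rfl step).trans ?_
    exact regroup (range u.length) (fun i => T2 M X (u.drop i) (start2 M))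
      (fun i => acc1 M (T1 M (u.take i) p)) (fun b => T2 M X v b = q) (fun _ => 1)
  · refine Finset.sum_congr rfl fun i _ => ?_
    rw [List.take_length_add_append, List.drop_length_add_append, T1_append]

lemma Ac_append (hM : ∀ w, w ∈ M.accepts ↔ w ∈ X) (u v : List A) (p : Set σ) :
    Ac M X (u ++ v) p
      = (∑ q' : Set σ × Prop, ind (acc2 M (T2 M X v q')) * Gs M X u p q')
        + Ac M X v (T1 M u p) := by
  unfold Ac Gs
  rw [List.length_append, Nat.add_assoc, Finset.sum_range_add]
  congr 1
  · have step : ∀ i ∈ range u.length,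
        ind (acc1 M (T1 M ((u ++ v).take i) p)
          ∧ acc2 M (T2 M X ((u ++ v).drop i) (start2 M))) * 1
        = ind (acc1 M (T1 M (u.take i) p)
            ∧ acc2 M (T2 M X v (T2 M X (u.drop i) (start2 M)))) * 1 := by
      intro i hi
      rw [Finset.mem_range] at hi
      rw [List.take_append_of_le_length (le_of_lt hi),
        List.drop_append_of_le_length (le_of_lt hi), T2_append hM]
    refine (Finset.sum_congr rfl step).trans ?_
    exact regroup (range u.length) (fun i => T2 M X (u.drop i) (start2 M))
      (fun i => acc1 M (T1 M (u.take i) p)) (fun b => acc2 M (T2 M X v b)) (fun _ => 1)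
  · refine Finset.sum_congr rfl fun i _ => ?_
    rw [List.take_length_add_append, List.drop_length_add_append, T1_append]

lemma Cs_append (hM : ∀ w, w ∈ M.accepts ↔ w ∈ X) (u v : List A) (q : Set σ × Prop)
    (r : Option σ) :
    Cs M X (u ++ v) q r
      = (∑ r' : Option σ, ind (T3 M v r' = r) * Cs M X u q r')
        + Cs M X v (T2 M X u q) r := by
  unfold Cs
  rw [List.length_append, Finset.sum_range_add]
  congr 1
  · have step : ∀ j ∈ range u.length,
        ind (acc2 M (T2 M X ((u ++ v).take j) q) ∧ T3 M ((u ++ v).drop j) (start3 M) = r) * 1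
        = ind (acc2 M (T2 M X (u.take j) q)
            ∧ T3 M v (T3 M (u.drop j) (start3 M)) = r) * 1 := by
      intro j hj
      rw [Finset.mem_range] at hj
      rw [List.take_append_of_le_length (le_of_lt hj),
        List.drop_append_of_le_length (le_of_lt hj), T3_append]
    refine (Finset.sum_congr rfl step).trans ?_
    exact regroup (range u.length) (fun j => T3 M (u.drop j) (start3 M))
      (fun j => acc2 M (T2 M X (u.take j) q)) (fun b => T3 M v b = r) (fun _ => 1)
  · refine Finset.sum_congr rfl fun j _ => ?_
    rw [List.take_length_add_append, List.drop_length_add_append, T2_append hM]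

lemma Bs_append (hM : ∀ w, w ∈ M.accepts ↔ w ∈ X) (u v : List A) (p : Set σ) (r : Option σ) :
    Bs M X (u ++ v) p r
      = (∑ r' : Option σ, ind (T3 M v r' = r) * Bs M X u p r')
        + ((∑ q' : Set σ × Prop, Gs M X u p q' * Cs M X v q' r) + Bs M X v (T1 M u p) r) := by
  unfold Bs
  rw [List.length_append, Finset.sum_range_add]
  congr 1
  · have step : ∀ j ∈ range u.length,
        ind (T3 M ((u ++ v).drop j) (start3 M) = r) * Ac M X ((u ++ v).take j) p
        = ind (True ∧ T3 M v (T3 M (u.drop j) (start3 M)) = r) * Ac M X (u.take j) p := by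
      intro j hj
      rw [Finset.mem_range] at hj
      rw [List.take_append_of_le_length (le_of_lt hj),
        List.drop_append_of_le_length (le_of_lt hj), T3_append,
        ind_congr (iff_of_eq (true_and _)).symm]
    refine (Finset.sum_congr rfl step).trans ?_
    refine (regroup (range u.length) (fun j => T3 M (u.drop j) (start3 M))
      (fun _ => True) (fun b => T3 M v b = r) (fun j => Ac M X (u.take j) p)).trans ?_
    simp only [true_and]
  · have step : ∀ j ∈ range v.length,
        ind (T3 M ((u ++ v).drop (u.length + j)) (start3 M) = r)
          * Ac M X ((u ++ v).take (u.length + j)) p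
        = (∑ q' : Set σ × Prop,
            ind (acc2 M (T2 M X (v.take j) q') ∧ T3 M (v.drop j) (start3 M) = r)
              * Gs M X u p q')
          + ind (T3 M (v.drop j) (start3 M) = r) * Ac M X (v.take j) (T1 M u p) := by
      intro j _
      rw [List.take_length_add_append, List.drop_length_add_append, Ac_append hM, mul_add]
      congr 1
      rw [Finset.mul_sum]
      refine Finset.sum_congr rfl fun q' _ => ?_
      rw [← mul_assoc, mul_comm (ind (T3 M (v.drop j) (start3 M) = r)), ind_mul_ind]
    refine (Finset.sum_congr rfl step).trans ?_
    rw [Finset.sum_add_distrib]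
    congr 1
    rw [Finset.sum_comm]
    refine Finset.sum_congr rfl fun q' _ => ?_
    unfold Cs
    rw [Finset.mul_sum]
    refine Finset.sum_congr rfl fun j _ => ?_
    rw [mul_comm, mul_one]

/-! ### delta via the counts -/

lemma delta_eq_card (X : Set (List A)) (w : List A) :
    delta X w = ((range (w.length + 1)).sigma (fun j => (range (j + 1)).filter (fun i =>
      (¬ ∃ s ∈ X, s <:+ w.take i) ∧ InStar X ((w.take j).drop i) ∧
      ¬ ∃ s ∈ X, s <+: w.drop j))).card := by
  classical
  set Sg := (range (w.length + 1)).sigma (fun j => (range (j + 1)).filter (fun i =>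
      (¬ ∃ s ∈ X, s <:+ w.take i) ∧ InStar X ((w.take j).drop i) ∧
      ¬ ∃ s ∈ X, s <+: w.drop j)) with hSg
  have hset : {p | IsParse X w p}
      = (fun x : (_ : ℕ) × ℕ => (w.take x.2, (w.take x.1).drop x.2, w.drop x.1)) '' ↑Sg := by
    ext p
    constructor
    · rintro ⟨hcat, h2, h3, h4⟩
      obtain ⟨v, x, u⟩ := p
      simp only at hcat h2 h3 h4
      have hw : w = v ++ x ++ u := hcat.symm
      subst hw
      have e1 : (v ++ x ++ u).take v.length = v := by
        rw [List.append_assoc, List.take_left]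
      have hlen : v.length + x.length = (v ++ x).length := List.length_append.symm
      have e2 : (v ++ x ++ u).take (v.length + x.length) = v ++ x := by
        rw [hlen, List.take_left]
      have e3 : (v ++ x).drop v.length = x := List.drop_left
      have e4 : (v ++ x ++ u).drop (v.length + x.length) = u := by
        rw [hlen, List.drop_left]
      refine ⟨⟨v.length + x.length, v.length⟩, ?_, ?_⟩
      · rw [Finset.mem_coe, hSg, Finset.mem_sigma, Finset.mem_range, Finset.mem_filter,
          Finset.mem_range]
        refine ⟨?_, ⟨?_, ?_, ?_, ?_⟩⟩
        · show v.length + x.length < (v ++ x ++ u).length + 1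
          simp only [List.length_append]
          omega
        · show v.length < v.length + x.length + 1
          omega
        · rw [e1]; exact h2
        · rw [e2, e3]; exact h3
        · rw [e4]; exact h4
      · simp only
        rw [e1, e2, e3, e4]
    · rintro ⟨⟨j, i⟩, hmem, rfl⟩
      rw [Finset.mem_coe, hSg, Finset.mem_sigma, Finset.mem_range, Finset.mem_filter,
        Finset.mem_range] at hmem
      dsimp only at hmem
      obtain ⟨hj, hi, hc1, hc2, hc3⟩ := hmem
      refine ⟨?_, hc1, hc2, hc3⟩
      simp only
      have h1 : (w.take j).take i = w.take i := by
        rw [List.take_take]; congr 1; omega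
      rw [← h1, List.take_append_drop, List.take_append_drop]
  rw [delta, hset, Set.ncard_image_of_injOn, Set.ncard_coe_finset]
  rintro ⟨j, i⟩ hx ⟨j', i'⟩ hy heq
  rw [Finset.mem_coe, hSg, Finset.mem_sigma, Finset.mem_range, Finset.mem_filter,
    Finset.mem_range] at hx hy
  dsimp only at hx hy
  obtain ⟨hj, hi, -⟩ := hx
  obtain ⟨hj', hi', -⟩ := hy
  simp only [Prod.mk.injEq] at heq
  obtain ⟨e1, e2, -⟩ := heq
  have hii : i = i' := by
    have := congrArg List.length e1
    simp only [List.length_take] at this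
    omega
  subst hii
  have hjj : j = j' := by
    have := congrArg List.length e2
    simp only [List.length_drop, List.length_take] at this
    omega
  subst hjj
  rfl

lemma delta_eq_sum (hM : ∀ w, w ∈ M.accepts ↔ w ∈ X) (w : List A) :
    delta X w = ∑ j ∈ range (w.length + 1),
      ind (acc3 M (T3 M (w.drop j) (start3 M))) * Ac M X (w.take j) ∅ := by
  classical
  rw [delta_eq_card X w, Finset.card_sigma]
  refine Finset.sum_congr rfl fun j hj => ?_
  rw [Finset.mem_range] at hj
  rw [Finset.card_filter]
  by_cases hc : acc3 M (T3 M (w.drop j) (start3 M))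
  · rw [ind_pos hc, one_mul]
    unfold Ac
    have hlen : (w.take j).length = j := by rw [List.length_take]; omega
    rw [hlen]
    have hc3 : ¬ ∃ s ∈ X, s <+: w.drop j := (noPrefix_iff_acc3 hM _).2 hc
    refine Finset.sum_congr rfl fun i hi => ?_
    rw [Finset.mem_range] at hi
    have h1 : (w.take j).take i = w.take i := by
      rw [List.take_take]; congr 1; omega
    rw [mul_one, ite_eq_ind, h1]
    refine ind_congr ?_
    constructor
    · rintro ⟨a, b, -⟩
      exact ⟨(noSuffix_iff_acc1 hM _).1 a, (instar_iff_acc2 hM _).1 b⟩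
    · rintro ⟨a, b⟩
      exact ⟨(noSuffix_iff_acc1 hM _).2 a, (instar_iff_acc2 hM _).2 b, hc3⟩
  · rw [ind_neg hc, zero_mul]
    have hc3 : ¬¬ ∃ s ∈ X, s <+: w.drop j := fun hno => hc ((noPrefix_iff_acc3 hM _).1 hno)
    rw [not_not] at hc3
    refine Finset.sum_eq_zero fun i _ => ?_
    rw [if_neg]
    rintro ⟨-, -, h3⟩
    exact h3 hc3

lemma delta_formula (hM : ∀ w, w ∈ M.accepts ↔ w ∈ X) (w : List A) :
    delta X w
      = (∑ r : Option σ, ind (acc3 M r) * Bs M X w ∅ r)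
        + ind (acc3 M (start3 M)) * Ac M X w ∅ := by
  rw [delta_eq_sum hM, Finset.sum_range_succ, List.drop_length, List.take_length, T3_nil]
  congr 1
  have h0 : (∑ j ∈ range w.length,
        ind (acc3 M (T3 M (w.drop j) (start3 M))) * Ac M X (w.take j) ∅)
      = ∑ j ∈ range w.length,
        ind (True ∧ acc3 M (T3 M (w.drop j) (start3 M))) * Ac M X (w.take j) ∅ := by
    refine Finset.sum_congr rfl fun j _ => ?_
    rw [ind_congr (iff_of_eq (true_and _)).symm]
  refine h0.trans ?_
  refine (regroup (range w.length) (fun j => T3 M (w.drop j) (start3 M)) (fun _ => True)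
    (fun b => acc3 M b) (fun j => Ac M X (w.take j) ∅)).trans ?_
  unfold Bs
  refine Finset.sum_congr rfl fun b _ => ?_
  congr 1
  refine Finset.sum_congr rfl fun j _ => ?_
  rw [ind_congr (iff_of_eq (true_and _))]

lemma delta_recover (hM : ∀ w, w ∈ M.accepts ↔ w ∈ X) (N : ℕ) (w : List A)
    (hw : delta X w ≤ N) :
    delta X w
      = (∑ r : Option σ, ind (acc3 M r) * min (Bs M X w ∅ r) N)
        + ind (acc3 M (start3 M)) * min (Ac M X w ∅) N := by
  have hform := delta_formula (X := X) hM w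
  rw [hform]
  congr 1
  · refine Finset.sum_congr rfl fun r _ => ?_
    by_cases hr : acc3 M r
    · rw [ind_pos hr, one_mul, one_mul, min_eq_left]
      have h1 : Bs M X w ∅ r ≤ delta X w := by
        rw [hform]
        refine le_trans ?_ (Nat.le_add_right _ _)
        calc Bs M X w ∅ r = ind (acc3 M r) * Bs M X w ∅ r := by rw [ind_pos hr, one_mul]
          _ ≤ _ := Finset.single_le_sum
            (f := fun r => ind (acc3 M r) * Bs M X w ∅ r)
            (fun _ _ => Nat.zero_le _) (Finset.mem_univ r)
      omega
    · rw [ind_neg hr, zero_mul, zero_mul]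
  · by_cases hs : acc3 M (start3 M)
    · rw [ind_pos hs, one_mul, one_mul, min_eq_left]
      have h1 : Ac M X w ∅ ≤ delta X w := by
        rw [hform, ind_pos hs, one_mul]
        exact Nat.le_add_left _ _
      omega
    · rw [ind_neg hs, zero_mul, zero_mul]

end Counts
/-! ### The finite monoid data -/

section MonoidData

open Finset

variable (M : DFA A σ) (X : Set (List A)) (N : ℕ)

abbrev Dt (A σ : Type) : Type :=
  (Set σ → Set σ) × ((Set σ × Prop) → (Set σ × Prop)) × (Option σ → Option σ)
  × (Set σ → (Set σ × Prop) → ℕ) × ((Set σ × Prop) → Option σ → ℕ) × (Set σ → ℕ)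
  × (Set σ → Option σ → ℕ)

noncomputable def phi (w : List A) : Dt A σ :=
  ⟨T1 M w, T2 M X w, T3 M w,
   fun p q => min (Gs M X w p q) N,
   fun q r => min (Cs M X w q r) N,
   fun p => min (Ac M X w p) N,
   fun p r => min (Bs M X w p r) N⟩

noncomputable def combine (d e : Dt A σ) : Dt A σ :=
  ⟨e.1 ∘ d.1, e.2.1 ∘ d.2.1, e.2.2.1 ∘ d.2.2.1,
   fun p q => min ((∑ q' : Set σ × Prop, ind (e.2.1 q' = q) * d.2.2.2.1 p q')
     + e.2.2.2.1 (d.1 p) q) N,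
   fun q r => min ((∑ r' : Option σ, ind (e.2.2.1 r' = r) * d.2.2.2.2.1 q r')
     + e.2.2.2.2.1 (d.2.1 q) r) N,
   fun p => min ((∑ q' : Set σ × Prop, ind (acc2 M (e.2.1 q')) * d.2.2.2.1 p q')
     + e.2.2.2.2.2.1 (d.1 p)) N,
   fun p r => min ((∑ r' : Option σ, ind (e.2.2.1 r' = r) * d.2.2.2.2.2.2 p r')
     + ((∑ q' : Set σ × Prop, min (d.2.2.2.1 p q' * e.2.2.2.2.1 q' r) N)
     + e.2.2.2.2.2.2 (d.1 p) r)) N⟩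

lemma phi_append (hM : ∀ w, w ∈ M.accepts ↔ w ∈ X) (u v : List A) :
    phi M X N (u ++ v) = combine M N (phi M X N u) (phi M X N v) := by
  unfold phi combine
  simp only [Prod.mk.injEq]
  refine ⟨?_, ?_, ?_, ?_, ?_, ?_, ?_⟩
  · funext S; exact T1_append u v S
  · funext s; exact T2_append hM u v s
  · funext s; exact T3_append u v s
  · funext p q
    rw [Gs_append hM u v p q, cap_add_left, cap_sum N Finset.univ]
    simp only [cap_ind_mul]
    rw [← cap_add_left, cap_add_right]
  · funext q r
    rw [Cs_append hM u v q r, cap_add_left, cap_sum N Finset.univ]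
    simp only [cap_ind_mul]
    rw [← cap_add_left, cap_add_right]
  · funext p
    rw [Ac_append hM u v p, cap_add_left, cap_sum N Finset.univ]
    simp only [cap_ind_mul]
    rw [← cap_add_left, cap_add_right]
  · funext p r
    have h1 : min (∑ r' : Option σ, ind (T3 M v r' = r) * Bs M X u p r') N
        = min (∑ r' : Option σ, ind (T3 M v r' = r) * min (Bs M X u p r') N) N := by
      rw [cap_sum]
      congr 1
      exact Finset.sum_congr rfl fun r' _ => cap_ind_mul N _ _
    have h2 : min (∑ q' : Set σ × Prop, Gs M X u p q' * Cs M X v q' r) N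
        = min (∑ q' : Set σ × Prop,
            min (min (Gs M X u p q') N * min (Cs M X v q' r) N) N) N := by
      rw [cap_sum]
      congr 1
      exact Finset.sum_congr rfl fun q' _ => cap_mul N _ _
    rw [Bs_append hM u v p r, cap_add3, h1, h2, ← cap_add3, cap_add3_right]

noncomputable def toFin (t : Dt A σ) :
    (Set σ → Set σ) × ((Set σ × Prop) → (Set σ × Prop)) × (Option σ → Option σ)
    × (Set σ → (Set σ × Prop) → Fin (N+1)) × ((Set σ × Prop) → Option σ → Fin (N+1))
    × (Set σ → Fin (N+1)) × (Set σ → Option σ → Fin (N+1)) :=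
  ⟨t.1, t.2.1, t.2.2.1,
   fun p q => ⟨min (t.2.2.2.1 p q) N, by omega⟩,
   fun q r => ⟨min (t.2.2.2.2.1 q r) N, by omega⟩,
   fun p => ⟨min (t.2.2.2.2.2.1 p) N, by omega⟩,
   fun p r => ⟨min (t.2.2.2.2.2.2 p r) N, by omega⟩⟩

lemma toFin_phi_injective (u v : List A)
    (h : toFin N (phi M X N u) = toFin N (phi M X N v)) : phi M X N u = phi M X N v := by
  unfold toFin phi at h
  unfold phi
  simp only [Prod.mk.injEq] at h ⊢
  obtain ⟨h1, h2, h3, h4, h5, h6, h7⟩ := h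
  refine ⟨h1, h2, h3, ?_, ?_, ?_, ?_⟩
  · funext p q
    have h' := congrArg Fin.val (congrFun (congrFun h4 p) q)
    dsimp only at h'
    omega
  · funext q r
    have h' := congrArg Fin.val (congrFun (congrFun h5 q) r)
    dsimp only at h'
    omega
  · funext p
    have h' := congrArg Fin.val (congrFun h6 p)
    dsimp only at h'
    omega
  · funext p r
    have h' := congrArg Fin.val (congrFun (congrFun h7 p) r)
    dsimp only at h'
    omega

end MonoidData
end Stmt4Aux

open PaperDefs in
theorem stmt_4 {A : Type} [Fintype A]
    (F X : Set (List A)) (hF : Factorial F) (hXF : X ⊆ F) (hrat : IsRational X)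
    (d : ℕ) (hd : Fdeg X F = (d : ℕ∞)) :
    ∃ W : FiniteMonoidHomWitness A,
      ∀ u ∈ F, ∀ v ∈ F, W.φ u = W.φ v → delta X u = delta X v := by
  classical
  obtain ⟨σ, instσ, M, hM⟩ := hrat
  letI : Fintype σ := instσ
  have hbound : ∀ w ∈ F, delta X w ≤ d := by
    intro w hw
    have h1 : (delta X w : ℕ∞) ≤ Fdeg X F :=
      le_iSup₂ (f := fun w (_ : w ∈ F) => ((delta X w : ℕ∞))) w hw
    rw [hd] at h1
    exact_mod_cast h1
  let Φ : List A → Stmt4Aux.Dt A σ := Stmt4Aux.phi M X d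
  have hΦ : ∀ u v : List A, Φ (u ++ v) = Stmt4Aux.combine M d (Φ u) (Φ v) :=
    fun u v => Stmt4Aux.phi_append M X d hM u v
  let st : Setoid (List A) := ⟨fun u v => Φ u = Φ v, ⟨fun _ => rfl, Eq.symm, Eq.trans⟩⟩
  have hcomp : ∀ (a b : List A), st.r a b → ∀ (c e : List A), st.r c e →
      st.r (a ++ c) (b ++ e) := by
    intro a b hab c e hce
    show Φ (a ++ c) = Φ (b ++ e)
    have hab' : Φ a = Φ b := hab
    have hce' : Φ c = Φ e := hce
    rw [hΦ, hΦ, hab', hce']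
  let Mq : Type := Quotient st
  letI mulInst : Mul Mq := ⟨Quotient.map₂ (· ++ ·) hcomp⟩
  letI oneInst : One Mq := ⟨Quotient.mk st []⟩
  have hmul_mk : ∀ x y : List A,
      (Quotient.mk st x) * (Quotient.mk st y) = Quotient.mk st (x ++ y) := fun x y => rfl
  letI monInst : Monoid Mq :=
    { mul := (· * ·)
      one := 1
      mul_assoc := fun a b c => by
        refine Quotient.inductionOn₃ a b c fun x y z => ?_
        show Quotient.mk st (x ++ y ++ z) = Quotient.mk st (x ++ (y ++ z))
        rw [List.append_assoc]
      one_mul := fun a => by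
        refine Quotient.inductionOn a fun x => ?_
        show Quotient.mk st ([] ++ x) = Quotient.mk st x
        rw [List.nil_append]
      mul_one := fun a => by
        refine Quotient.inductionOn a fun x => ?_
        show Quotient.mk st (x ++ []) = Quotient.mk st x
        rw [List.append_nil] }
  letI decσ : DecidableEq σ := Classical.decEq _
  letI decSetσ : DecidableEq (Set σ) := Classical.decEq _
  letI decProp : DecidableEq Prop := Classical.decEq _
  letI : Fintype Mq :=
    Fintype.ofInjective (fun x : Mq => Stmt4Aux.toFin d (Quotient.lift Φ (fun a b h => h) x))
      (fun x y => Quotient.inductionOn₂ x y fun a b h =>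
        Quotient.sound (Stmt4Aux.toFin_phi_injective M X d a b h))
  refine ⟨{ M := Mq, φ := fun w => Quotient.mk st w, map_nil := rfl,
            map_append := fun u v => (hmul_mk u v).symm }, ?_⟩
  intro u hu v hv h
  have hphi : Φ u = Φ v := Quotient.exact h
  rw [Stmt4Aux.delta_recover hM d u (hbound u hu), Stmt4Aux.delta_recover hM d v (hbound v hv)]
  have e6 : min (Stmt4Aux.Ac M X u ∅) d = min (Stmt4Aux.Ac M X v ∅) d :=
    congrFun (congrArg (fun t : Stmt4Aux.Dt A σ => t.2.2.2.2.2.1) hphi) ∅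
  have e7 : ∀ r, min (Stmt4Aux.Bs M X u ∅ r) d = min (Stmt4Aux.Bs M X v ∅ r) d :=
    fun r => congrFun (congrFun (congrArg (fun t : Stmt4Aux.Dt A σ => t.2.2.2.2.2.2) hphi) ∅) r
  congr 1
  · exact Finset.sum_congr rfl fun r _ => by rw [e7 r]
  · rw [e6]
end
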